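/- arXiv:2104.06121 — 5 statements merged into one kernel-verified Lean document; each statement's English description precedes it below -/
import Mathlib

section
/- Let X₁, X₂, X₃ be Polish spaces, γ¹² a Borel probability measure on X₁ × X₂ and γ¹³ a Borel probability measure on X₁ × X₃ with equal first marginals: π¹_♯ γ¹² = π¹_♯ γ¹³. Then there exists a Borel probability measure γ on X₁ × X₂ × X₃ such that π¹²_♯ γ = γ¹² and π¹³_♯ γ = γ¹³. -/
open MeasureTheory ProbabilityTheory

lemma gluing_aux {X₁ X₂ X₃ : Type*}
    [MeasurableSpace X₁] [MeasurableSpace X₂] [MeasurableSpace X₃]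
    (μ : Measure X₁) [SFinite μ]
    (κ : Kernel X₁ X₂) (η : Kernel X₁ X₃) [IsMarkovKernel κ] [IsMarkovKernel η] :
    (μ ⊗ₘ (κ ×ₖ η)).map (fun p => (p.1, p.2.1)) = μ ⊗ₘ κ ∧
    (μ ⊗ₘ (κ ×ₖ η)).map (fun p => (p.1, p.2.2)) = μ ⊗ₘ η := by
  constructor <;> ext s hs <;>
    rw [Measure.map_apply (by fun_prop) hs, Measure.compProd_apply (by
      exact (measurable_fst.prodMk (by fun_prop)) hs), Measure.compProd_apply hs] <;>
    refine lintegral_congr fun x => ?_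
  · rw [Kernel.prod_apply]
    have h : ((κ x).prod (η x)) (Prod.mk x ⁻¹' ((fun p : X₁ × X₂ × X₃ => (p.1, p.2.1)) ⁻¹' s))
        = ((κ x).prod (η x)) ((Prod.mk x ⁻¹' s) ×ˢ Set.univ) := by
      congr 1; ext y; simp
    rw [h, Measure.prod_prod]
    simp [Set.preimage]
  · rw [Kernel.prod_apply]
    have h : ((κ x).prod (η x)) (Prod.mk x ⁻¹' ((fun p : X₁ × X₂ × X₃ => (p.1, p.2.2)) ⁻¹' s))
        = ((κ x).prod (η x)) (Set.univ ×ˢ (Prod.mk x ⁻¹' s)) := by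
      congr 1; ext y; simp
    rw [h, Measure.prod_prod]
    simp [Set.preimage]

theorem gluing_lemma
    {X₁ X₂ X₃ : Type*}
    [TopologicalSpace X₁] [PolishSpace X₁] [MeasurableSpace X₁] [BorelSpace X₁]
    [TopologicalSpace X₂] [PolishSpace X₂] [MeasurableSpace X₂] [BorelSpace X₂]
    [TopologicalSpace X₃] [PolishSpace X₃] [MeasurableSpace X₃] [BorelSpace X₃]
    (γ12 : Measure (X₁ × X₂)) (γ13 : Measure (X₁ × X₃))
    [IsProbabilityMeasure γ12] [IsProbabilityMeasure γ13]
    (hmarg : γ12.map Prod.fst = γ13.map Prod.fst) :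
    ∃ γ : Measure (X₁ × X₂ × X₃), IsProbabilityMeasure γ ∧
      γ.map (fun p => (p.1, p.2.1)) = γ12 ∧
      γ.map (fun p => (p.1, p.2.2)) = γ13 := by
  have h2 : Nonempty X₂ := by
    by_contra h
    rw [not_nonempty_iff] at h
    have := measure_univ (μ := γ12)
    rw [Set.univ_eq_empty_iff.mpr inferInstance] at this
    simp at this
  have h3 : Nonempty X₃ := by
    by_contra h
    rw [not_nonempty_iff] at h
    have := measure_univ (μ := γ13)
    rw [Set.univ_eq_empty_iff.mpr inferInstance] at this
    simp at this
  set μ : Measure X₁ := γ12.fst with hμ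
  have hfst13 : γ13.fst = μ := by
    rw [hμ, Measure.fst, Measure.fst, hmarg]
  refine ⟨μ ⊗ₘ (γ12.condKernel ×ₖ γ13.condKernel), inferInstance, ?_, ?_⟩
  · rw [(gluing_aux μ γ12.condKernel γ13.condKernel).1,
      Measure.disintegrate]
  · rw [(gluing_aux μ γ12.condKernel γ13.condKernel).2, ← hfst13,
      Measure.disintegrate]
end

section
/- Let H be a separable Hilbert space and γ a Borel probability measure on H × H with finite second moments. If γ is concentrated on a cyclically monotone set M ⊂ H × H, then γ is an optimal coupling for the quadratic cost between its marginals: ∫ |x₁ - x₂|² dγ = W₂²(π¹_♯γ, π²_♯γ). -/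
open MeasureTheory Filter Topology ENNReal RealInnerProductSpace


/-- The set of couplings (transport plans) between two measures. -/
def couplings {X : Type*} [MeasurableSpace X] (μ ν : Measure X) :
    Set (Measure (X × X)) :=
  {γ | γ.map Prod.fst = μ ∧ γ.map Prod.snd = ν}

/-- The squared 2-Wasserstein distance. -/
noncomputable def W2Sq {X : Type*} [MeasurableSpace X] [PseudoMetricSpace X]
    (μ ν : Measure X) : ℝ≥0∞ :=
  ⨅ γ ∈ couplings μ ν, ∫⁻ q, ENNReal.ofReal (dist q.1 q.2 ^ 2) ∂γ

/-- A subset of `H × H` is cyclically monotone. -/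
def CyclicallyMonotoneSet {H : Type*} [NormedAddCommGroup H]
    [InnerProductSpace ℝ H] (M : Set (H × H)) : Prop :=
  ∀ (N : ℕ) (z : ℕ → H × H), (∀ k ≤ N, z k ∈ M) → z 0 = z N →
    0 ≤ ∑ k ∈ Finset.Icc 1 N, ⟪(z k).1 - (z (k - 1)).1, (z k).2⟫

set_option linter.unusedSectionVars false

section Aux

variable {H : Type*} [NormedAddCommGroup H] [InnerProductSpace ℝ H]

/-- Chains in `M` starting at `z₀`. -/
def RChain (M : Set (H × H)) (z₀ : H × H) : Type _ :=
  {p : ℕ × (ℕ → H × H) // p.2 0 = z₀ ∧ ∀ k ≤ p.1, p.2 k ∈ M}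

noncomputable def chainA {M : Set (H × H)} {z₀ : H × H} (c : RChain M z₀) (x : H) : ℝ :=
  ⟪x - (c.1.2 c.1.1).1, (c.1.2 c.1.1).2⟫ +
    ∑ j ∈ Finset.range c.1.1, ⟪(c.1.2 (j + 1)).1 - (c.1.2 j).1, (c.1.2 j).2⟫

noncomputable def rockPhi (M : Set (H × H)) (z₀ : H × H) (x : H) : EReal :=
  ⨆ c : RChain M z₀, ((chainA c x : ℝ) : EReal)

lemma rchain_nonempty {M : Set (H × H)} {z₀ : H × H} (hz₀ : z₀ ∈ M) :
    Nonempty (RChain M z₀) :=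
  ⟨⟨(0, fun _ => z₀), rfl, fun _ _ => hz₀⟩⟩

lemma rockPhi_ge_base {M : Set (H × H)} {z₀ : H × H} (hz₀ : z₀ ∈ M) (x : H) :
    ((⟪x - z₀.1, z₀.2⟫ : ℝ) : EReal) ≤ rockPhi M z₀ x := by
  have : chainA (⟨(0, fun _ => z₀), rfl, fun _ _ => hz₀⟩ : RChain M z₀) x
      = ⟪x - z₀.1, z₀.2⟫ := by
    simp [chainA]
  calc ((⟪x - z₀.1, z₀.2⟫ : ℝ) : EReal)
      = ((chainA (⟨(0, fun _ => z₀), rfl, fun _ _ => hz₀⟩ : RChain M z₀) x : ℝ) : EReal) := by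
        rw [this]
    _ ≤ rockPhi M z₀ x := le_iSup (fun c : RChain M z₀ => ((chainA c x : ℝ) : EReal)) _

lemma chainA_extend {M : Set (H × H)} {z₀ : H × H} (c : RChain M z₀) {p : H × H}
    (hp : p ∈ M) (z : H) :
    ∃ c' : RChain M z₀, chainA c' z = ⟪z - p.1, p.2⟫ + chainA c p.1 := by
  obtain ⟨⟨n, f⟩, h0, hmem⟩ := c
  refine ⟨⟨(n + 1, fun k => if k ≤ n then f k else p), by simpa using h0, ?_⟩, ?_⟩
  · intro k hk
    by_cases h : k ≤ n
    · simpa [h] using hmem k h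
    · simpa [h] using hp
  · simp only [chainA, Finset.sum_range_succ]
    have h1 : ∀ j ∈ Finset.range n,
        ⟪(if j + 1 ≤ n then f (j + 1) else p).1 - (if j ≤ n then f j else p).1,
          (if j ≤ n then f j else p).2⟫
        = ⟪(f (j + 1)).1 - (f j).1, (f j).2⟫ := by
      intro j hj
      have hj' := Finset.mem_range.mp hj
      rw [if_pos (by omega : j + 1 ≤ n), if_pos (by omega : j ≤ n)]
    rw [Finset.sum_congr rfl h1]
    have h2 : ¬ (n + 1 ≤ n) := by omega
    simp only [h2, if_neg, if_pos (le_refl n), if_false]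
    ring

lemma chainA_le_zero {M : Set (H × H)} {z₀ : H × H} (hM : CyclicallyMonotoneSet M)
    (hz₀ : z₀ ∈ M) (c : RChain M z₀) : chainA c z₀.1 ≤ 0 := by
  obtain ⟨⟨n, f⟩, h0, hmem⟩ := c
  set F : ℕ → H × H := fun k => if k ≤ n then f k else z₀ with hF
  set z : ℕ → H × H := fun k => F (n + 1 - k) with hz
  have hFmem : ∀ k, F k ∈ M := by
    intro k
    by_cases h : k ≤ n
    · rw [hF]; simp only [if_pos h]; exact hmem k h
    · rw [hF]; simp only [if_neg h]; exact hz₀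
  have hf0 : f 0 = z₀ := h0
  have hFn1 : F (n + 1) = z₀ := by rw [hF]; simp only [if_neg (by omega : ¬ n + 1 ≤ n)]
  have hF0 : F 0 = z₀ := by rw [hF]; simp only [if_pos (Nat.zero_le n)]; exact hf0
  have hcyc := hM (n + 1) z (fun k _ => hFmem _) ?cyc
  case cyc =>
    have h1 : z 0 = z₀ := by rw [hz]; simpa using hFn1
    have h2 : z (n + 1) = z₀ := by rw [hz]; simpa using hF0
    rw [h1, h2]
  -- rewrite the cyclic sum as the negative of chainA c z₀.1
  have key : ∑ k ∈ Finset.Icc 1 (n + 1), ⟪(z k).1 - (z (k - 1)).1, (z k).2⟫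
      = - chainA (⟨(n, f), h0, hmem⟩ : RChain M z₀) z₀.1 := by
    rw [← Finset.Ico_add_one_right_eq_Icc, Finset.sum_Ico_eq_sum_range]
    have e1 : ∀ i ∈ Finset.range (n + 1 + 1 - 1),
        ⟪(z (1 + i)).1 - (z (1 + i - 1)).1, (z (1 + i)).2⟫
        = ⟪(F (n - i)).1 - (F (n + 1 - i)).1, (F (n - i)).2⟫ := by
      intro i hi
      have : n + 1 - (1 + i) = n - i := by omega
      have h2 : 1 + i - 1 = i := by omega
      simp only [hz, this, h2]
    rw [Finset.sum_congr rfl e1]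
    have : n + 1 + 1 - 1 = n + 1 := by omega
    rw [this, ← Finset.sum_range_reflect
      (fun i => (⟪(F (n - i)).1 - (F (n + 1 - i)).1, (F (n - i)).2⟫ : ℝ)) (n + 1)]
    have e2 : ∀ i ∈ Finset.range (n + 1),
        ⟪(F (n - (n + 1 - 1 - i))).1 - (F (n + 1 - (n + 1 - 1 - i))).1,
          (F (n - (n + 1 - 1 - i))).2⟫
        = ⟪(F i).1 - (F (i + 1)).1, (F i).2⟫ := by
      intro i hi
      have hi' := Finset.mem_range.mp hi
      have a1 : n - (n + 1 - 1 - i) = i := by omega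
      have a2 : n + 1 - (n + 1 - 1 - i) = i + 1 := by omega
      rw [a1, a2]
    rw [Finset.sum_congr rfl e2, Finset.sum_range_succ]
    have e3 : ∀ i ∈ Finset.range n,
        (⟪(F i).1 - (F (i + 1)).1, (F i).2⟫ : ℝ)
        = - ⟪(f (i + 1)).1 - (f i).1, (f i).2⟫ := by
      intro i hi
      have hi' := Finset.mem_range.mp hi
      rw [hF]
      simp only [if_pos (by omega : i ≤ n), if_pos (by omega : i + 1 ≤ n)]
      rw [← inner_neg_left, neg_sub]
    rw [Finset.sum_congr rfl e3]
    have e4 : (⟪(F n).1 - (F (n + 1)).1, (F n).2⟫ : ℝ)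
        = - ⟪z₀.1 - (f n).1, (f n).2⟫ := by
      rw [hF]
      simp only [if_pos (le_refl n), if_neg (by omega : ¬ n + 1 ≤ n)]
      rw [← inner_neg_left, neg_sub]
    rw [e4, Finset.sum_neg_distrib]
    simp only [chainA]
    ring
  have := key ▸ hcyc
  linarith

lemma rockPhi_subgrad {M : Set (H × H)} {z₀ : H × H} {p : H × H} (hp : p ∈ M)
    (z : H) (c : RChain M z₀) :
    ((chainA c p.1 + ⟪z - p.1, p.2⟫ : ℝ) : EReal) ≤ rockPhi M z₀ z := by
  obtain ⟨c', hc'⟩ := chainA_extend c hp z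
  have : chainA c' z = chainA c p.1 + ⟪z - p.1, p.2⟫ := by rw [hc']; ring
  calc ((chainA c p.1 + ⟪z - p.1, p.2⟫ : ℝ) : EReal)
      = ((chainA c' z : ℝ) : EReal) := by rw [this]
    _ ≤ rockPhi M z₀ z := le_iSup (fun c : RChain M z₀ => ((chainA c z : ℝ) : EReal)) _

lemma rockPhi_le_zero {M : Set (H × H)} {z₀ : H × H} (hM : CyclicallyMonotoneSet M)
    (hz₀ : z₀ ∈ M) : rockPhi M z₀ z₀.1 ≤ 0 := by
  refine iSup_le fun c => ?_
  have := chainA_le_zero hM hz₀ c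
  exact_mod_cast this

lemma rockPhi_le_of_mem {M : Set (H × H)} {z₀ : H × H} (hM : CyclicallyMonotoneSet M)
    (hz₀ : z₀ ∈ M) {p : H × H} (hp : p ∈ M) :
    rockPhi M z₀ p.1 ≤ ((⟪p.1 - z₀.1, p.2⟫ : ℝ) : EReal) := by
  refine iSup_le fun c => ?_
  have h1 := rockPhi_subgrad hp z₀.1 c
  have h2 := rockPhi_le_zero hM hz₀
  have h3 : ((chainA c p.1 + ⟪z₀.1 - p.1, p.2⟫ : ℝ) : EReal) ≤ 0 := h1.trans h2
  have h4 : chainA c p.1 + ⟪z₀.1 - p.1, p.2⟫ ≤ 0 := by exact_mod_cast h3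
  have h5 : chainA c p.1 ≤ ⟪p.1 - z₀.1, p.2⟫ := by
    have : (⟪z₀.1 - p.1, p.2⟫ : ℝ) = - ⟪p.1 - z₀.1, p.2⟫ := by
      rw [← inner_neg_left, neg_sub]
    linarith [h4, this ▸ h4]
  exact_mod_cast h5

lemma rockPhi_ne_bot {M : Set (H × H)} {z₀ : H × H} (hz₀ : z₀ ∈ M) (x : H) :
    rockPhi M z₀ x ≠ ⊥ := by
  intro h
  have := rockPhi_ge_base hz₀ x
  rw [h] at this
  exact (EReal.coe_ne_bot _) (le_bot_iff.mp this)

lemma rockPhi_measurable {M : Set (H × H)} {z₀ : H × H}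
    [MeasurableSpace H] [OpensMeasurableSpace H] :
    Measurable (rockPhi M z₀) := by
  apply LowerSemicontinuous.measurable
  apply lowerSemicontinuous_iSup
  intro c
  apply Continuous.lowerSemicontinuous
  apply continuous_coe_real_ereal.comp
  apply Continuous.add
  · exact (continuous_id.sub continuous_const).inner continuous_const
  · exact continuous_const

end Aux

theorem key_inner_le
    {H : Type*} [NormedAddCommGroup H] [InnerProductSpace ℝ H]
    [SecondCountableTopology H] [MeasurableSpace H] [BorelSpace H]
    (γ γ' : Measure (H × H)) [IsProbabilityMeasure γ]
    (M : Set (H × H)) (hM : CyclicallyMonotoneSet M) (hconc : γ Mᶜ = 0)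
    {z₀ : H × H} (hz₀ : z₀ ∈ M)
    (hfst : γ'.map Prod.fst = γ.map Prod.fst) (hsnd : γ'.map Prod.snd = γ.map Prod.snd)
    (hγh : Integrable (fun q : H × H => (⟪q.1, q.2⟫ : ℝ)) γ)
    (hγ'h : Integrable (fun q : H × H => (⟪q.1, q.2⟫ : ℝ)) γ')
    (hn1 : Integrable (fun q : H × H => ‖q.1‖) γ)
    (hn2 : Integrable (fun q : H × H => ‖q.2‖) γ) :
    ∫ q, (⟪q.1, q.2⟫ : ℝ) ∂γ' ≤ ∫ q, (⟪q.1, q.2⟫ : ℝ) ∂γ := by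
  haveI : Nonempty (RChain M z₀) := rchain_nonempty hz₀
  set Φ : H → EReal := rockPhi M z₀ with hΦdef
  set f : H → ℝ := fun x => (Φ x).toReal with hfdef
  have hΦm : Measurable Φ := rockPhi_measurable
  have hfm : Measurable f := hΦm.ereal_toReal
  have hΦbot : ∀ x, Φ x ≠ ⊥ := rockPhi_ne_bot hz₀
  have hΦfin : ∀ p ∈ M, Φ p.1 ≠ ⊤ := fun p hp =>
    ne_top_of_le_ne_top (EReal.coe_ne_top _) (rockPhi_le_of_mem hM hz₀ hp)
  have hΦcoe : ∀ x, Φ x ≠ ⊤ → Φ x = ((f x : ℝ) : EReal) := fun x hx =>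
    (EReal.coe_toReal hx (hΦbot x)).symm
  have hbase : ∀ x, Φ x ≠ ⊤ → ⟪x - z₀.1, z₀.2⟫ ≤ f x := by
    intro x hx
    have h1 := rockPhi_ge_base hz₀ x
    rw [← hΦdef, hΦcoe x hx] at h1
    exact_mod_cast h1
  have hsub : ∀ p ∈ M, ∀ x, Φ x ≠ ⊤ → f p.1 + ⟪x - p.1, p.2⟫ ≤ f x := by
    intro p hp x hx
    have h1 : Φ p.1 ≤ ((f x - ⟪x - p.1, p.2⟫ : ℝ) : EReal) := by
      rw [hΦdef]
      refine iSup_le fun c => ?_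
      have h2 := rockPhi_subgrad hp x c
      rw [← hΦdef, hΦcoe x hx] at h2
      have h3 : chainA c p.1 + ⟪x - p.1, p.2⟫ ≤ f x := by exact_mod_cast h2
      have h4 : chainA c p.1 ≤ f x - ⟪x - p.1, p.2⟫ := by linarith
      exact_mod_cast h4
    rw [hΦcoe p.1 (hΦfin p hp)] at h1
    have h5 : f p.1 ≤ f x - ⟪x - p.1, p.2⟫ := by exact_mod_cast h1
    linarith
  -- the conjugate-type potential
  haveI : Nonempty {x : H // Φ x ≠ ⊤} := ⟨⟨z₀.1, hΦfin z₀ hz₀⟩⟩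
  set Ψ : H → EReal :=
    fun y => ⨆ x : {x : H // Φ x ≠ ⊤}, ((⟪x.1, y⟫ - f x.1 : ℝ) : EReal) with hΨdef
  set g : H → ℝ := fun y => (Ψ y).toReal with hgdef
  have hΨm : Measurable Ψ := by
    apply LowerSemicontinuous.measurable
    apply lowerSemicontinuous_iSup
    intro x
    apply Continuous.lowerSemicontinuous
    exact continuous_coe_real_ereal.comp
      ((continuous_const.inner continuous_id).sub continuous_const)
  have hgm : Measurable g := hΨm.ereal_toReal
  have hΨ_ge : ∀ (y : H) (x : {x : H // Φ x ≠ ⊤}),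
      ((⟪x.1, y⟫ - f x.1 : ℝ) : EReal) ≤ Ψ y := by
    intro y x
    rw [hΨdef]
    exact le_iSup (fun x : {x : H // Φ x ≠ ⊤} => ((⟪x.1, y⟫ - f x.1 : ℝ) : EReal)) x
  have hΨbot : ∀ y, Ψ y ≠ ⊥ := by
    intro y h
    have := hΨ_ge y ⟨z₀.1, hΦfin z₀ hz₀⟩
    rw [h] at this
    exact (EReal.coe_ne_bot _) (le_bot_iff.mp this)
  have hΨle : ∀ p ∈ M, Ψ p.2 ≤ ((⟪p.1, p.2⟫ - f p.1 : ℝ) : EReal) := by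
    intro p hp
    rw [hΨdef]
    refine iSup_le fun x => ?_
    have h1 := hsub p hp x.1 x.2
    rw [inner_sub_left] at h1
    have h2 : ⟪x.1, p.2⟫ - f x.1 ≤ ⟪p.1, p.2⟫ - f p.1 := by linarith
    exact_mod_cast h2
  have hΨfin : ∀ p ∈ M, Ψ p.2 ≠ ⊤ := fun p hp =>
    ne_top_of_le_ne_top (EReal.coe_ne_top _) (hΨle p hp)
  have hΨcoe : ∀ y, Ψ y ≠ ⊤ → Ψ y = ((g y : ℝ) : EReal) := fun y hy =>
    (EReal.coe_toReal hy (hΨbot y)).symm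
  have hgbase : ∀ y, Ψ y ≠ ⊤ → ⟪z₀.1, y⟫ - f z₀.1 ≤ g y := by
    intro y hy
    have h1 := hΨ_ge y ⟨z₀.1, hΦfin z₀ hz₀⟩
    rw [hΨcoe y hy] at h1
    exact_mod_cast h1
  have heqM : ∀ p ∈ M, f p.1 + g p.2 = ⟪p.1, p.2⟫ := by
    intro p hp
    have h1 := hΨle p hp
    have h2 := hΨ_ge p.2 ⟨p.1, hΦfin p hp⟩
    rw [hΨcoe p.2 (hΨfin p hp)] at h1 h2
    have h3 : g p.2 ≤ ⟪p.1, p.2⟫ - f p.1 := by exact_mod_cast h1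
    have h4 : ⟪p.1, p.2⟫ - f p.1 ≤ g p.2 := by exact_mod_cast h2
    linarith
  have hle : ∀ q : H × H, Φ q.1 ≠ ⊤ → Ψ q.2 ≠ ⊤ → ⟪q.1, q.2⟫ ≤ f q.1 + g q.2 := by
    intro q h1 h2
    have h3 := hΨ_ge q.2 ⟨q.1, h1⟩
    rw [hΨcoe q.2 h2] at h3
    have h4 : ⟪q.1, q.2⟫ - f q.1 ≤ g q.2 := by exact_mod_cast h3
    linarith
  -- null sets
  have hT1 : MeasurableSet {x : H | Φ x = ⊤} := hΦm (measurableSet_singleton ⊤)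
  have hT2 : MeasurableSet {y : H | Ψ y = ⊤} := hΨm (measurableSet_singleton ⊤)
  have hμT1 : γ.map Prod.fst {x : H | Φ x = ⊤} = 0 := by
    rw [Measure.map_apply measurable_fst hT1]
    refine measure_mono_null ?_ hconc
    intro q hq hqM
    exact hΦfin q hqM hq
  have hνT2 : γ.map Prod.snd {y : H | Ψ y = ⊤} = 0 := by
    rw [Measure.map_apply measurable_snd hT2]
    refine measure_mono_null ?_ hconc
    intro q hq hqM
    exact hΨfin q hqM hq
  have hγ'T1 : γ' (Prod.fst ⁻¹' {x : H | Φ x = ⊤}) = 0 := by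
    rw [← Measure.map_apply measurable_fst hT1, hfst]
    exact hμT1
  have hγ'T2 : γ' (Prod.snd ⁻¹' {y : H | Ψ y = ⊤}) = 0 := by
    rw [← Measure.map_apply measurable_snd hT2, hsnd]
    exact hνT2
  have haeγM : ∀ᵐ q ∂γ, q ∈ M := by
    rw [ae_iff]
    exact hconc
  have haeγeq : ∀ᵐ q ∂γ, f q.1 + g q.2 = ⟪q.1, q.2⟫ := haeγM.mono fun q hq => heqM q hq
  have haeγ' : ∀ᵐ q ∂γ', ⟪q.1, q.2⟫ ≤ f q.1 + g q.2 := by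
    have h1 : ∀ᵐ q ∂γ', Φ q.1 ≠ ⊤ := by
      rw [ae_iff]
      have he : {q : H × H | ¬ Φ q.1 ≠ ⊤} = Prod.fst ⁻¹' {x : H | Φ x = ⊤} := by
        ext q; simp
      rw [he]
      exact hγ'T1
    have h2 : ∀ᵐ q ∂γ', Ψ q.2 ≠ ⊤ := by
      rw [ae_iff]
      have he : {q : H × H | ¬ Ψ q.2 ≠ ⊤} = Prod.snd ⁻¹' {y : H | Ψ y = ⊤} := by
        ext q; simp
      rw [he]
      exact hγ'T2
    filter_upwards [h1, h2] with q hq1 hq2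
    exact hle q hq1 hq2
  -- integrability of auxiliary linear functionals
  have hI1 : Integrable (fun q : H × H => (⟪q.1, z₀.2⟫ : ℝ)) γ := by
    refine Integrable.mono' (hn1.const_mul ‖z₀.2‖) ?_ ?_
    · exact (continuous_fst.inner continuous_const).aestronglyMeasurable
    · refine Eventually.of_forall fun q => ?_
      rw [Real.norm_eq_abs]
      calc |⟪q.1, z₀.2⟫| ≤ ‖q.1‖ * ‖z₀.2‖ := abs_real_inner_le_norm _ _
        _ = ‖z₀.2‖ * ‖q.1‖ := mul_comm _ _
  have hI2 : Integrable (fun q : H × H => (⟪z₀.1, q.2⟫ : ℝ)) γ := by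
    refine Integrable.mono' (hn2.const_mul ‖z₀.1‖) ?_ ?_
    · exact (continuous_const.inner continuous_snd).aestronglyMeasurable
    · refine Eventually.of_forall fun q => ?_
      rw [Real.norm_eq_abs]
      calc |⟪z₀.1, q.2⟫| ≤ ‖z₀.1‖ * ‖q.2‖ := abs_real_inner_le_norm _ _
        _ = ‖z₀.1‖ * ‖q.2‖ := rfl
  -- integrability of f ∘ fst and g ∘ snd w.r.t. γ
  have hbf : Integrable
      (fun q : H × H => |⟪q.1, z₀.2⟫ - ⟪z₀.1, z₀.2⟫| + |⟪q.1, q.2⟫ - ⟪z₀.1, q.2⟫ + f z₀.1|) γ :=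
    ((hI1.sub (integrable_const _)).abs).add (((hγh.sub hI2).add (integrable_const _)).abs)
  have hIf : Integrable (fun q : H × H => f q.1) γ := by
    refine Integrable.mono' hbf (hfm.comp measurable_fst).aestronglyMeasurable ?_
    refine haeγM.mono fun q hq => ?_
    have hL : ⟪q.1, z₀.2⟫ - ⟪z₀.1, z₀.2⟫ ≤ f q.1 := by
      have := hbase q.1 (hΦfin q hq)
      rw [inner_sub_left] at this
      linarith
    have hU : f q.1 ≤ ⟪q.1, q.2⟫ - ⟪z₀.1, q.2⟫ + f z₀.1 := by
      have h1 := heqM q hq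
      have h2 := hgbase q.2 (hΨfin q hq)
      linarith
    rw [Real.norm_eq_abs, abs_le]
    constructor
    · have := neg_abs_le (⟪q.1, z₀.2⟫ - ⟪z₀.1, z₀.2⟫)
      have h3 := abs_nonneg (⟪q.1, q.2⟫ - ⟪z₀.1, q.2⟫ + f z₀.1)
      linarith
    · have := le_abs_self (⟪q.1, q.2⟫ - ⟪z₀.1, q.2⟫ + f z₀.1)
      have h3 := abs_nonneg (⟪q.1, z₀.2⟫ - ⟪z₀.1, z₀.2⟫)
      linarith
  have hbg : Integrable
      (fun q : H × H => |⟪z₀.1, q.2⟫ - f z₀.1| + |⟪q.1, q.2⟫ - ⟪q.1, z₀.2⟫ + ⟪z₀.1, z₀.2⟫|) γ :=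
    ((hI2.sub (integrable_const _)).abs).add (((hγh.sub hI1).add (integrable_const _)).abs)
  have hIg : Integrable (fun q : H × H => g q.2) γ := by
    refine Integrable.mono' hbg (hgm.comp measurable_snd).aestronglyMeasurable ?_
    refine haeγM.mono fun q hq => ?_
    have hL : ⟪z₀.1, q.2⟫ - f z₀.1 ≤ g q.2 := hgbase q.2 (hΨfin q hq)
    have hU : g q.2 ≤ ⟪q.1, q.2⟫ - ⟪q.1, z₀.2⟫ + ⟪z₀.1, z₀.2⟫ := by
      have h1 := heqM q hq
      have h2 := hbase q.1 (hΦfin q hq)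
      rw [inner_sub_left] at h2
      linarith
    rw [Real.norm_eq_abs, abs_le]
    constructor
    · have := neg_abs_le (⟪z₀.1, q.2⟫ - f z₀.1)
      have h3 := abs_nonneg (⟪q.1, q.2⟫ - ⟪q.1, z₀.2⟫ + ⟪z₀.1, z₀.2⟫)
      linarith
    · have := le_abs_self (⟪q.1, q.2⟫ - ⟪q.1, z₀.2⟫ + ⟪z₀.1, z₀.2⟫)
      have h3 := abs_nonneg (⟪z₀.1, q.2⟫ - f z₀.1)
      linarith
  -- transfer integrability to γ'
  have hfμ : Integrable f (γ.map Prod.fst) :=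
    (integrable_map_measure hfm.aestronglyMeasurable measurable_fst.aemeasurable).mpr hIf
  have hgν : Integrable g (γ.map Prod.snd) :=
    (integrable_map_measure hgm.aestronglyMeasurable measurable_snd.aemeasurable).mpr hIg
  have hfγ' : Integrable (fun q : H × H => f q.1) γ' := by
    have h1 : Integrable f (γ'.map Prod.fst) := by rw [hfst]; exact hfμ
    exact (integrable_map_measure hfm.aestronglyMeasurable measurable_fst.aemeasurable).mp h1
  have hgγ' : Integrable (fun q : H × H => g q.2) γ' := by
    have h1 : Integrable g (γ'.map Prod.snd) := by rw [hsnd]; exact hgν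
    exact (integrable_map_measure hgm.aestronglyMeasurable measurable_snd.aemeasurable).mp h1
  -- the chain of (in)equalities
  have e1 : ∫ q, f q.1 ∂γ' = ∫ q, f q.1 ∂γ := by
    have a1 : ∫ q, f q.1 ∂γ' = ∫ x, f x ∂(γ'.map Prod.fst) :=
      (integral_map measurable_fst.aemeasurable hfm.aestronglyMeasurable).symm
    have a2 : ∫ q, f q.1 ∂γ = ∫ x, f x ∂(γ.map Prod.fst) :=
      (integral_map measurable_fst.aemeasurable hfm.aestronglyMeasurable).symm
    rw [a1, a2, hfst]
  have e2 : ∫ q, g q.2 ∂γ' = ∫ q, g q.2 ∂γ := by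
    have a1 : ∫ q, g q.2 ∂γ' = ∫ y, g y ∂(γ'.map Prod.snd) :=
      (integral_map measurable_snd.aemeasurable hgm.aestronglyMeasurable).symm
    have a2 : ∫ q, g q.2 ∂γ = ∫ y, g y ∂(γ.map Prod.snd) :=
      (integral_map measurable_snd.aemeasurable hgm.aestronglyMeasurable).symm
    rw [a1, a2, hsnd]
  calc ∫ q, (⟪q.1, q.2⟫ : ℝ) ∂γ'
      ≤ ∫ q, (f q.1 + g q.2) ∂γ' := integral_mono_ae hγ'h (hfγ'.add hgγ') haeγ'
    _ = ∫ q, f q.1 ∂γ' + ∫ q, g q.2 ∂γ' := integral_add hfγ' hgγ'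
    _ = ∫ q, f q.1 ∂γ + ∫ q, g q.2 ∂γ := by rw [e1, e2]
    _ = ∫ q, (f q.1 + g q.2) ∂γ := (integral_add hIf hIg).symm
    _ = ∫ q, (⟪q.1, q.2⟫ : ℝ) ∂γ := integral_congr_ae haeγeq

theorem optimal_of_cyclically_monotone
    {H : Type*} [NormedAddCommGroup H] [InnerProductSpace ℝ H]
    [TopologicalSpace.SeparableSpace H] [MeasurableSpace H] [BorelSpace H]
    (γ : Measure (H × H)) [IsProbabilityMeasure γ]
    (hmom : ∫⁻ q, ENNReal.ofReal (‖q.1‖ ^ 2 + ‖q.2‖ ^ 2) ∂γ < ⊤)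
    (M : Set (H × H)) (hM : CyclicallyMonotoneSet M)
    (hconc : γ Mᶜ = 0) :
    ∫⁻ q, ENNReal.ofReal (dist q.1 q.2 ^ 2) ∂γ
      = W2Sq (γ.map Prod.fst) (γ.map Prod.snd) := by
  haveI : SecondCountableTopology H := UniformSpace.secondCountable_of_separable H
  -- a base point of M
  have hMne : M.Nonempty := by
    rcases Set.eq_empty_or_nonempty M with h | h
    · exfalso
      have h1 : γ Set.univ = 0 := by
        have : Mᶜ = Set.univ := by rw [h, Set.compl_empty]
        rw [← this]; exact hconc
      rw [measure_univ] at h1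
      exact one_ne_zero h1
    · exact h
  obtain ⟨z₀, hz₀⟩ := hMne
  -- integrability of moments w.r.t. γ
  have hsmnn : ∀ q : H × H, (0:ℝ) ≤ ‖q.1‖ ^ 2 + ‖q.2‖ ^ 2 := fun q => by positivity
  have hsm : Integrable (fun q : H × H => ‖q.1‖ ^ 2 + ‖q.2‖ ^ 2) γ := by
    constructor
    · exact ((continuous_fst.norm.pow 2).add (continuous_snd.norm.pow 2)).aestronglyMeasurable
    · rw [hasFiniteIntegral_iff_ofReal (Eventually.of_forall hsmnn)]
      exact hmom
  have hx2 : Integrable (fun q : H × H => ‖q.1‖ ^ 2) γ := by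
    refine Integrable.mono' hsm (continuous_fst.norm.pow 2).aestronglyMeasurable ?_
    refine Eventually.of_forall fun q => ?_
    rw [Real.norm_eq_abs, abs_of_nonneg (by positivity)]
    nlinarith [sq_nonneg ‖q.2‖]
  have hy2 : Integrable (fun q : H × H => ‖q.2‖ ^ 2) γ := by
    refine Integrable.mono' hsm (continuous_snd.norm.pow 2).aestronglyMeasurable ?_
    refine Eventually.of_forall fun q => ?_
    rw [Real.norm_eq_abs, abs_of_nonneg (by positivity)]
    nlinarith [sq_nonneg ‖q.1‖]
  have hn1 : Integrable (fun q : H × H => ‖q.1‖) γ := by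
    refine Integrable.mono' (hx2.add (integrable_const 1)) continuous_fst.norm.aestronglyMeasurable ?_
    refine Eventually.of_forall fun q => ?_
    rw [Real.norm_eq_abs, abs_of_nonneg (norm_nonneg _)]
    show ‖q.1‖ ≤ ‖q.1‖ ^ 2 + 1
    nlinarith [sq_nonneg (‖q.1‖ - 1)]
  have hn2 : Integrable (fun q : H × H => ‖q.2‖) γ := by
    refine Integrable.mono' (hy2.add (integrable_const 1)) continuous_snd.norm.aestronglyMeasurable ?_
    refine Eventually.of_forall fun q => ?_
    rw [Real.norm_eq_abs, abs_of_nonneg (norm_nonneg _)]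
    show ‖q.2‖ ≤ ‖q.2‖ ^ 2 + 1
    nlinarith [sq_nonneg (‖q.2‖ - 1)]
  have hγh : Integrable (fun q : H × H => (⟪q.1, q.2⟫ : ℝ)) γ := by
    refine Integrable.mono' hsm (continuous_fst.inner continuous_snd).aestronglyMeasurable ?_
    refine Eventually.of_forall fun q => ?_
    rw [Real.norm_eq_abs]
    have := abs_real_inner_le_norm q.1 q.2
    nlinarith [sq_nonneg (‖q.1‖ - ‖q.2‖), abs_nonneg (⟪q.1, q.2⟫ : ℝ)]
  -- dist squared expansion
  have hdist : ∀ q : H × H, dist q.1 q.2 ^ 2 = ‖q.1‖ ^ 2 - 2 * ⟪q.1, q.2⟫ + ‖q.2‖ ^ 2 := by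
    intro q
    rw [dist_eq_norm, norm_sub_sq_real]
  have hγd : Integrable (fun q : H × H => dist q.1 q.2 ^ 2) γ := by
    have : (fun q : H × H => dist q.1 q.2 ^ 2)
        = fun q : H × H => ‖q.1‖ ^ 2 - 2 * ⟪q.1, q.2⟫ + ‖q.2‖ ^ 2 := funext hdist
    rw [this]
    exact (hx2.sub (hγh.const_mul 2)).add hy2
  have hγdval : ∫ q, dist q.1 q.2 ^ 2 ∂γ
      = ∫ q, ‖q.1‖ ^ 2 ∂γ - 2 * ∫ q, (⟪q.1, q.2⟫ : ℝ) ∂γ + ∫ q, ‖q.2‖ ^ 2 ∂γ := by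
    have : (fun q : H × H => dist q.1 q.2 ^ 2)
        = fun q : H × H => ‖q.1‖ ^ 2 - 2 * ⟪q.1, q.2⟫ + ‖q.2‖ ^ 2 := funext hdist
    have h1 : Integrable (fun q : H × H => ‖q.1‖ ^ 2 - 2 * ⟪q.1, q.2⟫) γ :=
      hx2.sub (hγh.const_mul 2)
    rw [this, integral_add h1 hy2, integral_sub hx2 (hγh.const_mul 2), integral_const_mul]
  refine le_antisymm ?_ ?_
  · -- lower bound for every coupling
    rw [W2Sq]
    refine le_iInf fun γ' => le_iInf fun hγ' => ?_
    obtain ⟨hfst', hsnd'⟩ := hγ'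
    haveI : IsProbabilityMeasure (γ.map Prod.fst) :=
      Measure.isProbabilityMeasure_map measurable_fst.aemeasurable
    haveI : IsProbabilityMeasure γ' := by
      constructor
      have h1 : γ'.map Prod.fst Set.univ = γ' Set.univ := by
        rw [Measure.map_apply measurable_fst MeasurableSet.univ, Set.preimage_univ]
      rw [← h1, hfst']
      exact measure_univ
    -- moments of γ'
    have hx2μ : Integrable (fun x : H => ‖x‖ ^ 2) (γ.map Prod.fst) :=
      (integrable_map_measure (continuous_norm.pow 2).aestronglyMeasurable
        measurable_fst.aemeasurable).mpr hx2
    have hy2ν : Integrable (fun x : H => ‖x‖ ^ 2) (γ.map Prod.snd) :=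
      (integrable_map_measure (continuous_norm.pow 2).aestronglyMeasurable
        measurable_snd.aemeasurable).mpr hy2
    have hx2' : Integrable (fun q : H × H => ‖q.1‖ ^ 2) γ' := by
      have h1 : Integrable (fun x : H => ‖x‖ ^ 2) (γ'.map Prod.fst) := by
        rw [hfst']; exact hx2μ
      exact (integrable_map_measure (continuous_norm.pow 2).aestronglyMeasurable
        measurable_fst.aemeasurable).mp h1
    have hy2' : Integrable (fun q : H × H => ‖q.2‖ ^ 2) γ' := by
      have h1 : Integrable (fun x : H => ‖x‖ ^ 2) (γ'.map Prod.snd) := by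
        rw [hsnd']; exact hy2ν
      exact (integrable_map_measure (continuous_norm.pow 2).aestronglyMeasurable
        measurable_snd.aemeasurable).mp h1
    have hγ'h : Integrable (fun q : H × H => (⟪q.1, q.2⟫ : ℝ)) γ' := by
      refine Integrable.mono' (hx2'.add hy2')
        (continuous_fst.inner continuous_snd).aestronglyMeasurable ?_
      refine Eventually.of_forall fun q => ?_
      rw [Real.norm_eq_abs]
      show |(⟪q.1, q.2⟫ : ℝ)| ≤ ‖q.1‖ ^ 2 + ‖q.2‖ ^ 2
      have := abs_real_inner_le_norm q.1 q.2
      nlinarith [sq_nonneg (‖q.1‖ - ‖q.2‖), abs_nonneg (⟪q.1, q.2⟫ : ℝ)]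
    have hγ'd : Integrable (fun q : H × H => dist q.1 q.2 ^ 2) γ' := by
      have : (fun q : H × H => dist q.1 q.2 ^ 2)
          = fun q : H × H => ‖q.1‖ ^ 2 - 2 * ⟪q.1, q.2⟫ + ‖q.2‖ ^ 2 := funext hdist
      rw [this]
      exact (hx2'.sub (hγ'h.const_mul 2)).add hy2'
    have hγ'dval : ∫ q, dist q.1 q.2 ^ 2 ∂γ'
        = ∫ q, ‖q.1‖ ^ 2 ∂γ' - 2 * ∫ q, (⟪q.1, q.2⟫ : ℝ) ∂γ' + ∫ q, ‖q.2‖ ^ 2 ∂γ' := by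
      have : (fun q : H × H => dist q.1 q.2 ^ 2)
          = fun q : H × H => ‖q.1‖ ^ 2 - 2 * ⟪q.1, q.2⟫ + ‖q.2‖ ^ 2 := funext hdist
      have h1 : Integrable (fun q : H × H => ‖q.1‖ ^ 2 - 2 * ⟪q.1, q.2⟫) γ' :=
        hx2'.sub (hγ'h.const_mul 2)
      rw [this, integral_add h1 hy2', integral_sub hx2' (hγ'h.const_mul 2), integral_const_mul]
    -- equality of marginal moments
    have em1 : ∫ q, ‖q.1‖ ^ 2 ∂γ' = ∫ q, ‖q.1‖ ^ 2 ∂γ := by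
      have a1 : ∫ q, ‖q.1‖ ^ 2 ∂γ' = ∫ x, ‖x‖ ^ 2 ∂(γ'.map Prod.fst) :=
        (integral_map measurable_fst.aemeasurable
          (continuous_norm.pow 2).aestronglyMeasurable).symm
      have a2 : ∫ q, ‖q.1‖ ^ 2 ∂γ = ∫ x, ‖x‖ ^ 2 ∂(γ.map Prod.fst) :=
        (integral_map measurable_fst.aemeasurable
          (continuous_norm.pow 2).aestronglyMeasurable).symm
      rw [a1, a2, hfst']
    have em2 : ∫ q, ‖q.2‖ ^ 2 ∂γ' = ∫ q, ‖q.2‖ ^ 2 ∂γ := by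
      have a1 : ∫ q, ‖q.2‖ ^ 2 ∂γ' = ∫ x, ‖x‖ ^ 2 ∂(γ'.map Prod.snd) :=
        (integral_map measurable_snd.aemeasurable
          (continuous_norm.pow 2).aestronglyMeasurable).symm
      have a2 : ∫ q, ‖q.2‖ ^ 2 ∂γ = ∫ x, ‖x‖ ^ 2 ∂(γ.map Prod.snd) :=
        (integral_map measurable_snd.aemeasurable
          (continuous_norm.pow 2).aestronglyMeasurable).symm
      rw [a1, a2, hsnd']
    -- the key inequality
    have hkey : ∫ q, (⟪q.1, q.2⟫ : ℝ) ∂γ' ≤ ∫ q, (⟪q.1, q.2⟫ : ℝ) ∂γ :=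
      key_inner_le γ γ' M hM hconc hz₀ hfst' hsnd' hγh hγ'h hn1 hn2
    have hreal : ∫ q, dist q.1 q.2 ^ 2 ∂γ ≤ ∫ q, dist q.1 q.2 ^ 2 ∂γ' := by
      rw [hγdval, hγ'dval, em1, em2]
      linarith
    calc ∫⁻ q, ENNReal.ofReal (dist q.1 q.2 ^ 2) ∂γ
        = ENNReal.ofReal (∫ q, dist q.1 q.2 ^ 2 ∂γ) :=
          (ofReal_integral_eq_lintegral_ofReal hγd
            (Eventually.of_forall fun q => by positivity)).symm
      _ ≤ ENNReal.ofReal (∫ q, dist q.1 q.2 ^ 2 ∂γ') := ENNReal.ofReal_le_ofReal hreal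
      _ = ∫⁻ q, ENNReal.ofReal (dist q.1 q.2 ^ 2) ∂γ' :=
          ofReal_integral_eq_lintegral_ofReal hγ'd
            (Eventually.of_forall fun q => by positivity)
  · -- γ itself is a coupling
    rw [W2Sq]
    exact iInf₂_le γ ⟨rfl, rfl⟩
end

section
/- Let 𝕏 be a separable Banach space and 𝕐 a reflexive separable Banach space, p ∈ [1,∞), q ∈ (1,∞). The space C_{pq}^{sw}(𝕏 × 𝕐) of functions ζ : 𝕏 × 𝕐 → ℝ that are sequentially continuous with respect to the strong topology on 𝕏 and the weak topology on 𝕐, and satisfy: for every ε > 0 there exists A_ε ≥ 0 with |ζ(x,y)| ≤ A_ε(1 + ‖x‖^p) + ε‖y‖^q, is a Banach space under the norm ‖ζ‖ = sup_{(x,y)} |ζ(x,y)| / (1 + ‖x‖^p + ‖y‖^q). -/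
open Filter Topology

/-- Sequential convergence with respect to the weak topology of a Banach space. -/
def WeakSeqTendsto {Y : Type*} [NormedAddCommGroup Y] [NormedSpace ℝ Y]
    (y : ℕ → Y) (y₀ : Y) : Prop :=
  ∀ f : Y →L[ℝ] ℝ, Tendsto (fun k => f (y k)) atTop (𝓝 (f y₀))

/-- Membership in the space `C_{pq}^{sw}(𝕏 × 𝕐)`: sequential continuity w.r.t.
the strong topology on `𝕏` and weak topology on `𝕐`, together with the
`p`-`q` growth condition. -/
def MemCsw {X Y : Type*} [NormedAddCommGroup X] [NormedSpace ℝ X]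
    [NormedAddCommGroup Y] [NormedSpace ℝ Y] (p q : ℝ) (ζ : X × Y → ℝ) : Prop :=
  (∀ (x : ℕ → X) (x₀ : X) (y : ℕ → Y) (y₀ : Y),
      Tendsto x atTop (𝓝 x₀) → WeakSeqTendsto y y₀ →
      Tendsto (fun k => ζ (x k, y k)) atTop (𝓝 (ζ (x₀, y₀)))) ∧
  (∀ ε : ℝ, 0 < ε → ∃ A : ℝ, 0 ≤ A ∧
      ∀ x : X, ∀ y : Y, |ζ (x, y)| ≤ A * (1 + ‖x‖ ^ p) + ε * ‖y‖ ^ q)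

/-- The natural norm on `C_{pq}^{sw}(𝕏 × 𝕐)`. -/
noncomputable def CswNorm {X Y : Type*} [NormedAddCommGroup X]
    [NormedAddCommGroup Y] (p q : ℝ) (ζ : X × Y → ℝ) : ℝ :=
  ⨆ z : X × Y, |ζ z| / (1 + ‖z.1‖ ^ p + ‖z.2‖ ^ q)

section Aux

variable {X Y : Type*} [NormedAddCommGroup X] [NormedAddCommGroup Y]

lemma Csw_D_one_le (p q : ℝ) (z : X × Y) :
    (1 : ℝ) ≤ 1 + ‖z.1‖ ^ p + ‖z.2‖ ^ q := by
  have h1 : (0 : ℝ) ≤ ‖z.1‖ ^ p := Real.rpow_nonneg (norm_nonneg _) _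
  have h2 : (0 : ℝ) ≤ ‖z.2‖ ^ q := Real.rpow_nonneg (norm_nonneg _) _
  linarith

lemma Csw_D_pos (p q : ℝ) (z : X × Y) :
    (0 : ℝ) < 1 + ‖z.1‖ ^ p + ‖z.2‖ ^ q :=
  lt_of_lt_of_le one_pos (Csw_D_one_le p q z)

lemma CswNorm_nonneg (p q : ℝ) (ζ : X × Y → ℝ) : 0 ≤ CswNorm p q ζ :=
  Real.iSup_nonneg fun z => div_nonneg (abs_nonneg _) (Csw_D_pos p q z).le

lemma CswNorm_le (p q : ℝ) (ζ : X × Y → ℝ) {C : ℝ} (hC : 0 ≤ C)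
    (h : ∀ z : X × Y, |ζ z| ≤ C * (1 + ‖z.1‖ ^ p + ‖z.2‖ ^ q)) :
    CswNorm p q ζ ≤ C := by
  refine Real.iSup_le (fun z => ?_) hC
  rw [div_le_iff₀ (Csw_D_pos p q z)]
  exact h z

lemma Csw_le_norm (p q : ℝ) (ζ : X × Y → ℝ) {C : ℝ}
    (h : ∀ z : X × Y, |ζ z| ≤ C * (1 + ‖z.1‖ ^ p + ‖z.2‖ ^ q)) (z : X × Y) :
    |ζ z| ≤ CswNorm p q ζ * (1 + ‖z.1‖ ^ p + ‖z.2‖ ^ q) := by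
  have hbdd : BddAbove (Set.range fun z : X × Y =>
      |ζ z| / (1 + ‖z.1‖ ^ p + ‖z.2‖ ^ q)) := by
    refine ⟨C, ?_⟩
    rintro r ⟨w, rfl⟩
    rw [div_le_iff₀ (Csw_D_pos p q w)]
    exact h w
  have := le_ciSup hbdd z
  rw [div_le_iff₀ (Csw_D_pos p q z)] at this
  exact this

/-- The growth condition gives a global linear bound against the weight. -/
lemma MemCsw_bound {X' Y' : Type*} [NormedAddCommGroup X'] [NormedSpace ℝ X']
    [NormedAddCommGroup Y'] [NormedSpace ℝ Y'] {p q : ℝ} {ζ : X' × Y' → ℝ}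
    (h : MemCsw p q ζ) :
    ∃ C : ℝ, 0 ≤ C ∧ ∀ z : X' × Y', |ζ z| ≤ C * (1 + ‖z.1‖ ^ p + ‖z.2‖ ^ q) := by
  obtain ⟨A, hA, hbound⟩ := h.2 1 one_pos
  refine ⟨A + 1, by linarith, fun z => ?_⟩
  have h1 : (0 : ℝ) ≤ ‖z.1‖ ^ p := Real.rpow_nonneg (norm_nonneg _) _
  have h2 : (0 : ℝ) ≤ ‖z.2‖ ^ q := Real.rpow_nonneg (norm_nonneg _) _
  have := hbound z.1 z.2
  calc |ζ z| = |ζ (z.1, z.2)| := by rw [Prod.mk.eta]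
    _ ≤ A * (1 + ‖z.1‖ ^ p) + 1 * ‖z.2‖ ^ q := this
    _ ≤ (A + 1) * (1 + ‖z.1‖ ^ p + ‖z.2‖ ^ q) := by nlinarith

/-- Weakly convergent sequences are norm-bounded (Banach–Steinhaus). -/
lemma WeakSeqTendsto.bounded {Y' : Type*} [NormedAddCommGroup Y'] [NormedSpace ℝ Y']
    {y : ℕ → Y'} {y₀ : Y'} (h : WeakSeqTendsto y y₀) :
    ∃ M : ℝ, 0 ≤ M ∧ ∀ k, ‖y k‖ ≤ M := by
  set g : ℕ → (Y' →L[ℝ] ℝ) →L[ℝ] ℝ :=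
    fun k => NormedSpace.inclusionInDoubleDual ℝ Y' (y k) with hg
  have hpt : ∀ f : Y' →L[ℝ] ℝ, ∃ C, ∀ k, ‖g k f‖ ≤ C := by
    intro f
    obtain ⟨C, hC⟩ := ((h f).norm.bddAbove_range)
    refine ⟨C, fun k => ?_⟩
    have : ‖f (y k)‖ ≤ C := hC (Set.mem_range_self k)
    simpa [hg, NormedSpace.dual_def] using this
  obtain ⟨C', hC'⟩ := banach_steinhaus hpt
  refine ⟨max C' 0, le_max_right _ _, fun k => ?_⟩
  have : ‖g k‖ = ‖y k‖ := (NormedSpace.inclusionInDoubleDualLi ℝ).norm_map (y k)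
  calc ‖y k‖ = ‖g k‖ := this.symm
    _ ≤ C' := hC' k
    _ ≤ max C' 0 := le_max_left _ _

end Aux

theorem Csw_banach
    {X Y : Type*} [NormedAddCommGroup X] [NormedSpace ℝ X]
    [TopologicalSpace.SeparableSpace X]
    [NormedAddCommGroup Y] [NormedSpace ℝ Y]
    [TopologicalSpace.SeparableSpace Y]
    (hrefl : Function.Surjective (NormedSpace.inclusionInDoubleDual ℝ Y))
    (p q : ℝ) (hp : 1 ≤ p) (hq : 1 < q) :
    -- `C_{pq}^{sw}` is a linear subspace:
    (∀ ζ₁ ζ₂ : X × Y → ℝ, MemCsw p q ζ₁ → MemCsw p q ζ₂ →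
        MemCsw p q (fun z => ζ₁ z + ζ₂ z)) ∧
    (∀ (c : ℝ) (ζ : X × Y → ℝ), MemCsw p q ζ → MemCsw p q (fun z => c * ζ z)) ∧
    -- it is complete with respect to the norm `CswNorm`:
    (∀ ζ : ℕ → X × Y → ℝ, (∀ n, MemCsw p q (ζ n)) →
      (∀ ε : ℝ, 0 < ε → ∃ N : ℕ, ∀ m ≥ N, ∀ n ≥ N,
          CswNorm p q (fun z => ζ m z - ζ n z) ≤ ε) →
      ∃ ζlim : X × Y → ℝ, MemCsw p q ζlim ∧
        Tendsto (fun n => CswNorm p q (fun z => ζ n z - ζlim z)) atTop (𝓝 0)) := by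
  refine ⟨?_, ?_, ?_⟩
  · -- closed under addition
    rintro ζ₁ ζ₂ ⟨hc₁, hg₁⟩ ⟨hc₂, hg₂⟩
    constructor
    · intro x x₀ y y₀ hx hy
      exact (hc₁ x x₀ y y₀ hx hy).add (hc₂ x x₀ y y₀ hx hy)
    · intro ε hε
      obtain ⟨A₁, hA₁, h₁⟩ := hg₁ (ε / 2) (by linarith)
      obtain ⟨A₂, hA₂, h₂⟩ := hg₂ (ε / 2) (by linarith)
      refine ⟨A₁ + A₂, by linarith, fun x y => ?_⟩
      have := abs_add_le (ζ₁ (x, y)) (ζ₂ (x, y))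
      have b₁ := h₁ x y
      have b₂ := h₂ x y
      simp only
      nlinarith [Real.rpow_nonneg (norm_nonneg x) p, Real.rpow_nonneg (norm_nonneg y) q]
  · -- closed under scalar multiplication
    rintro c ζ ⟨hc, hg⟩
    constructor
    · intro x x₀ y y₀ hx hy
      exact (hc x x₀ y y₀ hx hy).const_mul c
    · intro ε hε
      have hcpos : (0 : ℝ) < |c| + 1 := by positivity
      obtain ⟨A, hA, h⟩ := hg (ε / (|c| + 1)) (by positivity)
      refine ⟨(|c| + 1) * A, by positivity, fun x y => ?_⟩
      have hb := h x y
      have habs : |c * ζ (x, y)| = |c| * |ζ (x, y)| := abs_mul _ _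
      have h1 : (0 : ℝ) ≤ 1 + ‖x‖ ^ p := by
        have := Real.rpow_nonneg (norm_nonneg x) p; linarith
      have h2 : (0 : ℝ) ≤ ‖y‖ ^ q := Real.rpow_nonneg (norm_nonneg y) q
      have key : |c| * |ζ (x, y)| ≤
          |c| * (A * (1 + ‖x‖ ^ p) + ε / (|c| + 1) * ‖y‖ ^ q) :=
        mul_le_mul_of_nonneg_left hb (abs_nonneg c)
      have hc1 : |c| * (ε / (|c| + 1)) ≤ ε := by
        rw [mul_div_assoc'] at *
        rw [div_le_iff₀ hcpos]
        nlinarith [abs_nonneg c]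
      simp only
      calc |c * ζ (x, y)| = |c| * |ζ (x, y)| := habs
        _ ≤ |c| * (A * (1 + ‖x‖ ^ p) + ε / (|c| + 1) * ‖y‖ ^ q) := key
        _ = |c| * A * (1 + ‖x‖ ^ p) + (|c| * (ε / (|c| + 1))) * ‖y‖ ^ q := by ring
        _ ≤ (|c| + 1) * A * (1 + ‖x‖ ^ p) + ε * ‖y‖ ^ q := by
            have : |c| * A ≤ (|c| + 1) * A := by nlinarith [abs_nonneg c]
            nlinarith [mul_le_mul_of_nonneg_right hc1 h2]
  · -- completeness
    intro ζ hmem hCauchy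
    -- pointwise bounds for differences
    have hdiff : ∀ m n : ℕ, ∀ z : X × Y,
        |ζ m z - ζ n z| ≤ CswNorm p q (fun z => ζ m z - ζ n z) *
          (1 + ‖z.1‖ ^ p + ‖z.2‖ ^ q) := by
      intro m n z
      obtain ⟨Cm, _, hCm⟩ := MemCsw_bound (hmem m)
      obtain ⟨Cn, _, hCn⟩ := MemCsw_bound (hmem n)
      have hb : ∀ w : X × Y, |ζ m w - ζ n w| ≤ (Cm + Cn) * (1 + ‖w.1‖ ^ p + ‖w.2‖ ^ q) := by
        intro w
        calc |ζ m w - ζ n w| ≤ |ζ m w| + |ζ n w| := abs_sub _ _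
          _ ≤ (Cm + Cn) * (1 + ‖w.1‖ ^ p + ‖w.2‖ ^ q) := by
              have := hCm w; have := hCn w; nlinarith
      exact Csw_le_norm p q (fun w => ζ m w - ζ n w) hb z
    -- pointwise Cauchy, define the limit
    have hptCauchy : ∀ z : X × Y, CauchySeq (fun n => ζ n z) := by
      intro z
      rw [Metric.cauchySeq_iff']
      intro ε hε
      set D := 1 + ‖z.1‖ ^ p + ‖z.2‖ ^ q with hD
      have hDpos : 0 < D := Csw_D_pos p q z
      obtain ⟨N, hN⟩ := hCauchy (ε / (2 * D)) (by positivity)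
      refine ⟨N, fun n hn => ?_⟩
      have h1 := hdiff n N z
      have h2 := hN n hn N le_rfl
      have : |ζ n z - ζ N z| ≤ ε / (2 * D) * D := by
        calc |ζ n z - ζ N z| ≤ CswNorm p q (fun w => ζ n w - ζ N w) * D := h1
          _ ≤ ε / (2 * D) * D := mul_le_mul_of_nonneg_right h2 hDpos.le
      have heq : ε / (2 * D) * D = ε / 2 := by field_simp
      rw [Real.dist_eq]
      calc |ζ n z - ζ N z| ≤ ε / 2 := heq ▸ this
        _ < ε := by linarith
    choose ζlim hζlim using fun z => cauchySeq_tendsto_of_complete (hptCauchy z)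
    -- uniform weighted convergence
    have hunif : ∀ ε : ℝ, 0 < ε → ∃ N : ℕ, ∀ n ≥ N, ∀ z : X × Y,
        |ζ n z - ζlim z| ≤ ε * (1 + ‖z.1‖ ^ p + ‖z.2‖ ^ q) := by
      intro ε hε
      obtain ⟨N, hN⟩ := hCauchy ε hε
      refine ⟨N, fun n hn z => ?_⟩
      have hDpos := Csw_D_pos p q z
      have hlim : Tendsto (fun m => |ζ n z - ζ m z|) atTop (𝓝 |ζ n z - ζlim z|) :=
        ((tendsto_const_nhds.sub (hζlim z)).abs)
      refine le_of_tendsto hlim ?_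
      filter_upwards [eventually_ge_atTop N] with m hm
      calc |ζ n z - ζ m z| ≤ CswNorm p q (fun w => ζ n w - ζ m w) *
            (1 + ‖z.1‖ ^ p + ‖z.2‖ ^ q) := hdiff n m z
        _ ≤ ε * (1 + ‖z.1‖ ^ p + ‖z.2‖ ^ q) :=
            mul_le_mul_of_nonneg_right (hN n hn m hm) hDpos.le
    refine ⟨ζlim, ⟨?_, ?_⟩, ?_⟩
    · -- sequential continuity of the limit
      intro x x₀ y y₀ hx hy
      rw [Metric.tendsto_atTop]
      intro ε hε
      -- bound the weights along the sequence
      obtain ⟨M, hM0, hM⟩ := hy.bounded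
      obtain ⟨R, hR⟩ := (hx.norm.bddAbove_range)
      have hR' : ∀ k, ‖x k‖ ≤ max R 0 := fun k =>
        le_trans (hR (Set.mem_range_self k)) (le_max_left _ _)
      set B : ℝ := 1 + (max R 0) ^ p + M ^ q +
          (1 + ‖x₀‖ ^ p + ‖y₀‖ ^ q) with hB
      have hDk : ∀ k, 1 + ‖x k‖ ^ p + ‖y k‖ ^ q ≤ B := by
        intro k
        have h1 : ‖x k‖ ^ p ≤ (max R 0) ^ p :=
          Real.rpow_le_rpow (norm_nonneg _) (hR' k) (by linarith)
        have h2 : ‖y k‖ ^ q ≤ M ^ q :=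
          Real.rpow_le_rpow (norm_nonneg _) (hM k) (by linarith)
        have h3 : (0 : ℝ) < 1 + ‖x₀‖ ^ p + ‖y₀‖ ^ q := Csw_D_pos p q (x₀, y₀)
        simp only [hB]; linarith
      have hD0 : 1 + ‖x₀‖ ^ p + ‖y₀‖ ^ q ≤ B := by
        have h1 : (0 : ℝ) ≤ (max R 0) ^ p := Real.rpow_nonneg (le_max_right _ _) _
        have h2 : (0 : ℝ) ≤ M ^ q := Real.rpow_nonneg hM0 _
        simp only [hB]; linarith
      have hBpos : 0 < B := lt_of_lt_of_le (Csw_D_pos p q (x₀, y₀)) hD0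
      -- choose an approximating function
      set ε' : ℝ := ε / (3 * (B + 1)) with hε'
      have hε'pos : 0 < ε' := by positivity
      obtain ⟨N, hN⟩ := hunif ε' hε'pos
      have hε'B : ∀ D : ℝ, D ≤ B → 0 < D → ε' * D ≤ ε / 3 := by
        intro D hDB hDpos
        have : ε' * D ≤ ε' * B := mul_le_mul_of_nonneg_left hDB hε'pos.le
        have hB1 : ε' * B ≤ ε / 3 := by
          rw [hε']
          rw [div_mul_eq_mul_div, div_le_div_iff₀ (by positivity) (by norm_num : (0:ℝ) < 3)]
          nlinarith
        exact this.trans hB1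
      -- continuity of ζ N along the sequence
      have hcont := (hmem N).1 x x₀ y y₀ hx hy
      rw [Metric.tendsto_atTop] at hcont
      obtain ⟨K, hK⟩ := hcont (ε / 3) (by linarith)
      refine ⟨K, fun k hk => ?_⟩
      have ha := hN N le_rfl (x k, y k)
      have hb := hN N le_rfl (x₀, y₀)
      have hc := hK k hk
      rw [Real.dist_eq] at hc ⊢
      have e1 : ε' * (1 + ‖x k‖ ^ p + ‖y k‖ ^ q) ≤ ε / 3 :=
        hε'B _ (hDk k) (Csw_D_pos p q (x k, y k))
      have e2 : ε' * (1 + ‖x₀‖ ^ p + ‖y₀‖ ^ q) ≤ ε / 3 :=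
        hε'B _ hD0 (Csw_D_pos p q (x₀, y₀))
      calc |ζlim (x k, y k) - ζlim (x₀, y₀)|
          ≤ |ζlim (x k, y k) - ζ N (x k, y k)| + |ζ N (x k, y k) - ζ N (x₀, y₀)|
            + |ζ N (x₀, y₀) - ζlim (x₀, y₀)| := by
            have := abs_sub_le (ζlim (x k, y k)) (ζ N (x₀, y₀)) (ζlim (x₀, y₀))
            have := abs_sub_le (ζlim (x k, y k)) (ζ N (x k, y k)) (ζ N (x₀, y₀))
            linarith
        _ < ε := by
            have ha' : |ζlim (x k, y k) - ζ N (x k, y k)| ≤ ε / 3 := by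
              rw [abs_sub_comm]; exact le_trans ha e1
            have hb' : |ζ N (x₀, y₀) - ζlim (x₀, y₀)| ≤ ε / 3 := le_trans hb e2
            linarith
    · -- growth condition of the limit
      intro ε hε
      obtain ⟨N, hN⟩ := hunif (ε / 2) (by linarith)
      obtain ⟨A₀, hA₀, hA⟩ := (hmem N).2 (ε / 2) (by linarith)
      refine ⟨A₀ + ε / 2, by linarith, fun x y => ?_⟩
      have h1 := hN N le_rfl (x, y)
      have h2 := hA x y
      have hxp : (0 : ℝ) ≤ ‖x‖ ^ p := Real.rpow_nonneg (norm_nonneg _) _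
      have hyq : (0 : ℝ) ≤ ‖y‖ ^ q := Real.rpow_nonneg (norm_nonneg _) _
      have : |ζlim (x, y)| ≤ |ζ N (x, y)| + |ζ N (x, y) - ζlim (x, y)| := by
        have := abs_sub_abs_le_abs_sub (ζlim (x, y)) (ζ N (x, y))
        rw [abs_sub_comm] at this
        linarith
      simp only at h1 ⊢
      nlinarith
    · -- convergence in the weighted norm
      rw [Metric.tendsto_atTop]
      intro ε hε
      obtain ⟨N, hN⟩ := hunif (ε / 2) (by linarith)
      refine ⟨N, fun n hn => ?_⟩
      have hle : CswNorm p q (fun z => ζ n z - ζlim z) ≤ ε / 2 :=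
        CswNorm_le p q _ (by linarith) (hN n hn)
      have hge : 0 ≤ CswNorm p q (fun z => ζ n z - ζlim z) :=
        CswNorm_nonneg p q _
      rw [Real.dist_eq]
      rw [abs_of_nonneg (by simpa using hge)]
      simpa using lt_of_le_of_lt hle (by linarith)
end

section
/- Let 𝕐 be a reflexive separable Banach space and q ∈ (1,∞). If a sequence (μ_n) of Borel probability measures on 𝕐 with finite q-th moments converges to μ narrowly with respect to the weak topology of 𝕐 (i.e. ∫ f dμ_n → ∫ f dμ for every bounded sequentially weakly continuous f) and sup_n ∫ ‖y‖^q dμ_n < ∞, then ∫ ζ dμ_n → ∫ ζ dμ for every sequentially weakly continuous ζ : 𝕐 → ℝ with lim_{‖y‖→∞} ζ(y)/(1 + ‖y‖^q) = 0. -/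
open MeasureTheory Filter Topology ENNReal

/-- A sequentially weakly continuous real function. -/
def SeqWeakCont {Y : Type*} [NormedAddCommGroup Y] [NormedSpace ℝ Y]
    (f : Y → ℝ) : Prop :=
  ∀ (y : ℕ → Y) (y₀ : Y), WeakSeqTendsto y y₀ →
    Tendsto (fun k => f (y k)) atTop (𝓝 (f y₀))

/-- A sequentially weakly continuous function is continuous (in the norm topology). -/
lemma SeqWeakCont.continuous {Y : Type*} [NormedAddCommGroup Y] [NormedSpace ℝ Y]
    {f : Y → ℝ} (hf : SeqWeakCont f) : Continuous f := by
  rw [continuous_iff_seqContinuous]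
  intro y y₀ hy
  exact hf y y₀ (fun L => (L.continuous.tendsto y₀).comp hy)

theorem convergence_in_Pqw
    {Y : Type*} [NormedAddCommGroup Y] [NormedSpace ℝ Y]
    [TopologicalSpace.SeparableSpace Y] [MeasurableSpace Y] [BorelSpace Y]
    (hrefl : Function.Surjective (NormedSpace.inclusionInDoubleDual ℝ Y))
    (q : ℝ) (hq : 1 < q)
    (μs : ℕ → Measure Y) (μ : Measure Y)
    (hprob : ∀ n, IsProbabilityMeasure (μs n)) [IsProbabilityMeasure μ]
    (hmomμ : ∫⁻ y, ENNReal.ofReal (‖y‖ ^ q) ∂μ < ⊤)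
    (hnarrow : ∀ f : Y → ℝ, SeqWeakCont f → (∃ C : ℝ, ∀ y, |f y| ≤ C) →
        Tendsto (fun n => ∫ y, f y ∂(μs n)) atTop (𝓝 (∫ y, f y ∂μ)))
    (hbdd : ∃ C : ℝ≥0∞, C ≠ ⊤ ∧ ∀ n, ∫⁻ y, ENNReal.ofReal (‖y‖ ^ q) ∂(μs n) ≤ C) :
    ∀ ζ : Y → ℝ, SeqWeakCont ζ →
      (∀ ε : ℝ, 0 < ε → ∃ A : ℝ, 0 ≤ A ∧ ∀ y, |ζ y| ≤ A + ε * ‖y‖ ^ q) →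
      Tendsto (fun n => ∫ y, ζ y ∂(μs n)) atTop (𝓝 (∫ y, ζ y ∂μ)) := by
  intro ζ hζw hgrow
  have hζc : Continuous ζ := hζw.continuous
  have hq0 : (0 : ℝ) < q := lt_trans one_pos hq
  have hnq_cont : Continuous fun y : Y => ‖y‖ ^ q := by
    have : Continuous fun x : ℝ => x ^ q := by
      apply Real.continuous_rpow_const hq0.le
    exact this.comp continuous_norm
  have hnq_nn : ∀ y : Y, (0:ℝ) ≤ ‖y‖ ^ q := fun y => Real.rpow_nonneg (norm_nonneg y) q
  -- integrability of the moment function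
  have hmint : ∀ (ν : Measure Y), IsProbabilityMeasure ν →
      (∫⁻ y, ENNReal.ofReal (‖y‖ ^ q) ∂ν < ⊤) → Integrable (fun y => ‖y‖ ^ q) ν := by
    intro ν hν hmom
    refine ⟨hnq_cont.aestronglyMeasurable, ?_⟩
    rw [hasFiniteIntegral_iff_ofReal (ae_of_all _ hnq_nn)]
    exact hmom
  have hmeq : ∀ (ν : Measure Y), IsProbabilityMeasure ν →
      ∫ y, ‖y‖ ^ q ∂ν = (∫⁻ y, ENNReal.ofReal (‖y‖ ^ q) ∂ν).toReal := by
    intro ν hν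
    exact integral_eq_lintegral_of_nonneg_ae (ae_of_all _ hnq_nn)
      hnq_cont.aestronglyMeasurable
  obtain ⟨C, hCtop, hC⟩ := hbdd
  rw [Metric.tendsto_atTop]
  intro ε hε
  set Cr := C.toReal with hCrdef
  set mμ := (∫⁻ y, ENNReal.ofReal (‖y‖ ^ q) ∂μ).toReal with hmμdef
  have hCr0 : 0 ≤ Cr := ENNReal.toReal_nonneg
  have hmμ0 : 0 ≤ mμ := ENNReal.toReal_nonneg
  have hden : (0:ℝ) < 3 * (Cr + mμ + 1) := by linarith
  set δ := ε / (3 * (Cr + mμ + 1)) with hδdef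
  have hδ : 0 < δ := div_pos hε hden
  have hδmul : δ * (Cr + mμ + 1) = ε / 3 := by
    rw [hδdef, div_mul_eq_mul_div, mul_comm 3, ← div_div,
      mul_div_cancel_right₀ _ (by linarith : (0:ℝ) < Cr + mμ + 1).ne']
  obtain ⟨A, hA0, hAbd⟩ := hgrow δ hδ
  set g : Y → ℝ := fun y => max (min (ζ y) A) (-A) with hgdef
  have hgb : ∀ y, |g y| ≤ A := by
    intro y
    rw [abs_le]
    constructor
    · exact le_max_right _ _
    · exact max_le (min_le_right _ _) (by linarith)
  have hgw : SeqWeakCont g := fun y y₀ h =>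
    ((hζw y y₀ h).min tendsto_const_nhds).max tendsto_const_nhds
  have hgc : Continuous g := (hζc.min continuous_const).max continuous_const
  -- pointwise truncation error bound
  have hpt : ∀ y, |ζ y - g y| ≤ δ * ‖y‖ ^ q := by
    intro y
    have habs := abs_le.mp (hAbd y)
    have hnn : 0 ≤ δ * ‖y‖ ^ q := mul_nonneg hδ.le (hnq_nn y)
    rcases le_total (ζ y) A with h1 | h1
    · rcases le_total (-A) (ζ y) with h2 | h2
      · have : g y = ζ y := by
          simp only [hgdef]; rw [min_eq_left h1, max_eq_left h2]
        rw [this]; simpa using hnn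
      · have : g y = -A := by
          simp only [hgdef]; rw [min_eq_left h1, max_eq_right h2]
        rw [this, abs_le]
        exact ⟨by linarith [habs.1], by linarith [habs.1, habs.2]⟩
    · have : g y = A := by
        simp only [hgdef]; rw [min_eq_right h1, max_eq_left (by linarith : -A ≤ A)]
      rw [this, abs_le]
      exact ⟨by linarith [habs.1, habs.2], by linarith [habs.2]⟩
  -- key integral estimate
  have key : ∀ (ν : Measure Y), IsProbabilityMeasure ν →
      (∫⁻ y, ENNReal.ofReal (‖y‖ ^ q) ∂ν < ⊤) →
      |∫ y, ζ y ∂ν - ∫ y, g y ∂ν| ≤ δ * (∫⁻ y, ENNReal.ofReal (‖y‖ ^ q) ∂ν).toReal := by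
    intro ν hν hmom
    haveI := hν
    have hmi : Integrable (fun y => ‖y‖ ^ q) ν := hmint ν hν hmom
    obtain ⟨A₁, hA₁0, hA₁bd⟩ := hgrow 1 one_pos
    have hζint : Integrable ζ ν := by
      refine Integrable.mono' ((integrable_const A₁).add hmi) hζc.aestronglyMeasurable
        (ae_of_all _ fun y => ?_)
      simpa [Real.norm_eq_abs] using hA₁bd y
    have hgint : Integrable g ν := by
      refine Integrable.mono' (integrable_const A) hgc.aestronglyMeasurable
        (ae_of_all _ fun y => ?_)
      simpa [Real.norm_eq_abs] using hgb y
    have h1 : |∫ y, ζ y ∂ν - ∫ y, g y ∂ν| = |∫ y, (ζ y - g y) ∂ν| := by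
      rw [integral_sub hζint hgint]
    rw [h1, ← hmeq ν hν, ← integral_const_mul]
    calc |∫ y, (ζ y - g y) ∂ν| ≤ ∫ y, |ζ y - g y| ∂ν := by
          simpa [Real.norm_eq_abs] using norm_integral_le_integral_norm (fun y => ζ y - g y) (μ := ν)
      _ ≤ ∫ y, δ * ‖y‖ ^ q ∂ν := by
          refine integral_mono (hζint.sub hgint).abs (hmi.const_mul δ) hpt
  -- moments of μs n are finite and bounded
  have hmomn : ∀ n, ∫⁻ y, ENNReal.ofReal (‖y‖ ^ q) ∂(μs n) < ⊤ :=
    fun n => lt_of_le_of_lt (hC n) (lt_top_iff_ne_top.mpr hCtop)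
  have hmomnCr : ∀ n, (∫⁻ y, ENNReal.ofReal (‖y‖ ^ q) ∂(μs n)).toReal ≤ Cr :=
    fun n => ENNReal.toReal_mono hCtop (hC n)
  -- narrow convergence for g
  have hgt := hnarrow g hgw ⟨A, hgb⟩
  rw [Metric.tendsto_atTop] at hgt
  obtain ⟨N, hN⟩ := hgt (ε / 3) (by linarith)
  refine ⟨N, fun n hn => ?_⟩
  haveI := hprob n
  have e1 : |∫ y, ζ y ∂(μs n) - ∫ y, g y ∂(μs n)| ≤ δ * Cr :=
    le_trans (key (μs n) (hprob n) (hmomn n))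
      (mul_le_mul_of_nonneg_left (hmomnCr n) hδ.le)
  have e2 : |∫ y, ζ y ∂μ - ∫ y, g y ∂μ| ≤ δ * mμ := key μ inferInstance hmomμ
  have e3 : |∫ y, g y ∂(μs n) - ∫ y, g y ∂μ| < ε / 3 := by
    simpa [Real.dist_eq] using hN n hn
  rw [Real.dist_eq]
  have := abs_sub_le (∫ y, ζ y ∂(μs n)) (∫ y, g y ∂(μs n)) (∫ y, ζ y ∂μ)
  have h2 := abs_sub_le (∫ y, g y ∂(μs n)) (∫ y, g y ∂μ) (∫ y, ζ y ∂μ)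
  have hδCr : δ * Cr + δ * mμ < ε / 3 + ε / 3 := by nlinarith
  have e2' : |∫ y, g y ∂μ - ∫ y, ζ y ∂μ| ≤ δ * mμ := by rwa [abs_sub_comm]
  linarith
end

section
/- Let 𝕐 be a reflexive separable Banach space and q ∈ (1,∞). If a sequence (μ_n) in P_q(𝕐) converges to μ in the topology σ(P_q(𝕐), C_q^w(𝕐)), then sup_n ∫ ‖y‖^q dμ_n < ∞. -/
open MeasureTheory Filter Topology ENNReal

section Aux
variable {Y : Type*} [NormedAddCommGroup Y] [NormedSpace ℝ Y]

noncomputable def sFun (e : ℕ → Y →L[ℝ] ℝ) : ℕ → Y → ℝ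
  | 0, y => |e 0 y|
  | (k+1), y => max (sFun e k y) |e (k+1) y|

lemma sFun_nonneg (e : ℕ → Y →L[ℝ] ℝ) (k : ℕ) (y : Y) : 0 ≤ sFun e k y := by
  induction k with
  | zero => exact abs_nonneg _
  | succ k ih => exact le_trans ih (le_max_left _ _)

lemma abs_apply_le {e : ℕ → Y →L[ℝ] ℝ} (he : ∀ h, ‖e h‖ ≤ 1) (h : ℕ) (y : Y) :
    |e h y| ≤ ‖y‖ := by
  calc |e h y| = ‖e h y‖ := (Real.norm_eq_abs _).symm
    _ ≤ ‖e h‖ * ‖y‖ := (e h).le_opNorm y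
    _ ≤ 1 * ‖y‖ := mul_le_mul_of_nonneg_right (he h) (norm_nonneg y)
    _ = ‖y‖ := one_mul _

lemma sFun_le_norm {e : ℕ → Y →L[ℝ] ℝ} (he : ∀ h, ‖e h‖ ≤ 1) (k : ℕ) (y : Y) :
    sFun e k y ≤ ‖y‖ := by
  induction k with
  | zero => exact abs_apply_le he 0 y
  | succ k ih => exact max_le ih (abs_apply_le he _ y)

lemma sFun_mono (e : ℕ → Y →L[ℝ] ℝ) (y : Y) : Monotone (fun k => sFun e k y) :=
  monotone_nat_of_le_succ fun _ => le_max_left _ _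

lemma le_sFun (e : ℕ → Y →L[ℝ] ℝ) {h k : ℕ} (hk : h ≤ k) (y : Y) :
    |e h y| ≤ sFun e k y := by
  induction k with
  | zero => simp only [Nat.le_zero] at hk; subst hk; exact le_refl _
  | succ k ih =>
    rcases Nat.le_succ_iff.mp hk with h1 | h1
    · exact le_trans (ih h1) (le_max_left _ _)
    · subst h1; exact le_max_right _ _

lemma sFun_continuous (e : ℕ → Y →L[ℝ] ℝ) (k : ℕ) : Continuous (fun y => sFun e k y) := by
  induction k with
  | zero => exact (e 0).continuous.abs
  | succ k ih => exact ih.max (e (k+1)).continuous.abs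

lemma sFun_tendsto (e : ℕ → Y →L[ℝ] ℝ) (k : ℕ) {ys : ℕ → Y} {y₀ : Y}
    (hw : WeakSeqTendsto ys y₀) :
    Tendsto (fun j => sFun e k (ys j)) atTop (𝓝 (sFun e k y₀)) := by
  induction k with
  | zero => exact (hw (e 0)).abs
  | succ k ih => exact ih.max (hw (e (k+1))).abs

noncomputable def etaF (e : ℕ → Y →L[ℝ] ℝ) (q : ℝ) (k : ℕ) (y : Y) : ℝ :=
  min (sFun e k y ^ q) k

lemma etaF_nonneg (e : ℕ → Y →L[ℝ] ℝ) (q : ℝ) (k : ℕ) (y : Y) : 0 ≤ etaF e q k y :=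
  le_min (Real.rpow_nonneg (sFun_nonneg e k y) q) (Nat.cast_nonneg k)

lemma etaF_le_k (e : ℕ → Y →L[ℝ] ℝ) (q : ℝ) (k : ℕ) (y : Y) : etaF e q k y ≤ k :=
  min_le_right _ _

lemma etaF_le_norm {e : ℕ → Y →L[ℝ] ℝ} (he : ∀ h, ‖e h‖ ≤ 1) {q : ℝ} (hq : 0 ≤ q)
    (k : ℕ) (y : Y) : etaF e q k y ≤ ‖y‖ ^ q :=
  le_trans (min_le_left _ _)
    (Real.rpow_le_rpow (sFun_nonneg e k y) (sFun_le_norm he k y) hq)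

lemma etaF_mono (e : ℕ → Y →L[ℝ] ℝ) {q : ℝ} (hq : 0 ≤ q) (y : Y) :
    Monotone (fun k => etaF e q k y) := fun i j hij =>
  min_le_min (Real.rpow_le_rpow (sFun_nonneg e i y) (sFun_mono e y hij) hq)
    (Nat.cast_le.2 hij)

lemma etaF_continuous (e : ℕ → Y →L[ℝ] ℝ) {q : ℝ} (hq : 0 ≤ q) (k : ℕ) :
    Continuous (fun y => etaF e q k y) :=
  ((sFun_continuous e k).rpow_const (fun _ => Or.inr hq)).min continuous_const

lemma etaF_seqTendsto (e : ℕ → Y →L[ℝ] ℝ) {q : ℝ} (hq : 0 ≤ q) (k : ℕ)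
    {ys : ℕ → Y} {y₀ : Y} (hw : WeakSeqTendsto ys y₀) :
    Tendsto (fun j => etaF e q k (ys j)) atTop (𝓝 (etaF e q k y₀)) :=
  ((sFun_tendsto e k hw).rpow_const (Or.inr hq)).min tendsto_const_nhds

lemma etaF_tendsto {e : ℕ → Y →L[ℝ] ℝ} (he : ∀ h, ‖e h‖ ≤ 1)
    (he2 : ∀ (y : Y), ∀ ε > (0:ℝ), ∃ h, ‖y‖ - ε ≤ |e h y|)
    {q : ℝ} (hq : 0 ≤ q) (y : Y) :
    Tendsto (fun k => etaF e q k y) atTop (𝓝 (‖y‖ ^ q)) := by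
  have hbdd : BddAbove (Set.range fun k => sFun e k y) :=
    ⟨‖y‖, by rintro _ ⟨k, rfl⟩; exact sFun_le_norm he k y⟩
  have hsup : (⨆ k, sFun e k y) = ‖y‖ := by
    refine le_antisymm (ciSup_le fun k => sFun_le_norm he k y) ?_
    refine le_of_forall_pos_le_add fun ε hε => ?_
    obtain ⟨h, hh⟩ := he2 y ε hε
    have : |e h y| ≤ ⨆ k, sFun e k y :=
      le_trans (le_sFun e le_rfl y) (le_ciSup hbdd h)
    linarith
  have h1 : Tendsto (fun k => sFun e k y) atTop (𝓝 ‖y‖) := by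
    rw [← hsup]; exact tendsto_atTop_ciSup (sFun_mono e y) hbdd
  have h2 : Tendsto (fun k => sFun e k y ^ q) atTop (𝓝 (‖y‖ ^ q)) :=
    h1.rpow_const (Or.inr hq)
  refine h2.congr' ?_
  filter_upwards [eventually_ge_atTop (⌈‖y‖ ^ q⌉₊)] with k hk
  have hk' : ‖y‖ ^ q ≤ (k : ℝ) := le_trans (Nat.le_ceil _) (Nat.cast_le.2 hk)
  exact (min_eq_left (le_trans
    (Real.rpow_le_rpow (sFun_nonneg e k y) (sFun_le_norm he k y) hq) hk')).symm

lemma bdd_of_weakSeqTendsto {ys : ℕ → Y} {y₀ : Y} (hw : WeakSeqTendsto ys y₀) :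
    ∃ R : ℝ, 0 ≤ R ∧ ∀ j, ‖ys j‖ ≤ R := by
  set g : ℕ → StrongDual ℝ (StrongDual ℝ Y) :=
    fun j => NormedSpace.inclusionInDoubleDual ℝ Y (ys j) with hg
  have hpt : ∀ f : StrongDual ℝ Y, ∃ C, ∀ j, ‖g j f‖ ≤ C := by
    intro f
    have hb : BddAbove (Set.range fun j => ‖f (ys j)‖) := (hw f).norm.bddAbove_range
    obtain ⟨C, hC⟩ := hb
    exact ⟨C, fun j => hC ⟨j, rfl⟩⟩
  obtain ⟨C, hC⟩ := banach_steinhaus hpt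
  refine ⟨max C 0, le_max_right _ _, fun j => ?_⟩
  have : ‖g j‖ = ‖ys j‖ :=
    (NormedSpace.inclusionInDoubleDualLi ℝ (E := Y)).norm_map (ys j)
  rw [← this]
  exact le_trans (hC j) (le_max_left _ _)

lemma exists_norming [TopologicalSpace.SeparableSpace Y] :
    ∃ e : ℕ → Y →L[ℝ] ℝ, (∀ h, ‖e h‖ ≤ 1) ∧
      ∀ (y : Y), ∀ ε > (0:ℝ), ∃ h, ‖y‖ - ε ≤ |e h y| := by
  have : Nonempty Y := ⟨0⟩
  set d := TopologicalSpace.denseSeq Y with hd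
  choose e he1 he2 using fun m => exists_dual_vector'' ℝ (d m)
  refine ⟨e, he1, fun y ε hε => ?_⟩
  have hdr : DenseRange d := TopologicalSpace.denseRange_denseSeq Y
  obtain ⟨m, hm⟩ := hdr.exists_dist_lt y (half_pos hε)
  refine ⟨m, ?_⟩
  have hyd : ‖y - d m‖ < ε / 2 := by rwa [← dist_eq_norm]
  have h1 : |e m (d m)| = ‖d m‖ := by rw [he2 m]; simp [abs_of_nonneg]
  have h2 : |e m (d m)| ≤ |e m y| + |e m (d m - y)| := by
    have : e m (d m) = e m y + e m (d m - y) := by rw [map_sub]; ring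
    rw [this]; exact abs_add_le _ _
  have h3 : |e m (d m - y)| ≤ ‖d m - y‖ := abs_apply_le he1 m _
  have h4 : ‖d m - y‖ < ε / 2 := by rwa [norm_sub_rev]
  have h5 : ‖y‖ ≤ ‖d m‖ + ‖y - d m‖ := norm_le_insert' _ _
  linarith
end Aux

set_option maxHeartbeats 1000000 in
theorem moment_bound_of_Pqw_convergence
    {Y : Type*} [NormedAddCommGroup Y] [NormedSpace ℝ Y]
    [TopologicalSpace.SeparableSpace Y] [MeasurableSpace Y] [BorelSpace Y]
    (hrefl : Function.Surjective (NormedSpace.inclusionInDoubleDual ℝ Y))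
    (q : ℝ) (hq : 1 < q)
    (μs : ℕ → Measure Y) (μ : Measure Y)
    (hprob : ∀ n, IsProbabilityMeasure (μs n)) [IsProbabilityMeasure μ]
    (hmom : ∀ n, ∫⁻ y, ENNReal.ofReal (‖y‖ ^ q) ∂(μs n) < ⊤)
    (hmomμ : ∫⁻ y, ENNReal.ofReal (‖y‖ ^ q) ∂μ < ⊤)
    (hconv : ∀ ζ : Y → ℝ, SeqWeakCont ζ →
      (∀ ε : ℝ, 0 < ε → ∃ A : ℝ, 0 ≤ A ∧ ∀ y, |ζ y| ≤ A + ε * ‖y‖ ^ q) →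
      Tendsto (fun n => ∫ y, ζ y ∂(μs n)) atTop (𝓝 (∫ y, ζ y ∂μ))) :
    ∃ C : ℝ≥0∞, C ≠ ⊤ ∧ ∀ n, ∫⁻ y, ENNReal.ofReal (‖y‖ ^ q) ∂(μs n) ≤ C := by
  classical
  obtain ⟨e, he1, he2⟩ := exists_norming (Y := Y)
  have hq0 : (0:ℝ) < q := lt_trans one_pos hq
  set η : ℕ → Y → ℝ := etaF e q with hη
  -- integrability of the q-th power of the norm
  have hnormq_cont : Continuous fun y : Y => ‖y‖ ^ q :=
    continuous_norm.rpow_const fun _ => Or.inr hq0.le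
  have hint_normq : ∀ n, Integrable (fun y => ‖y‖ ^ q) (μs n) := by
    intro n
    refine ⟨hnormq_cont.aestronglyMeasurable, ?_⟩
    rw [HasFiniteIntegral]
    have : ∀ y : Y, (‖‖y‖ ^ q‖ₑ : ℝ≥0∞) = ENNReal.ofReal (‖y‖ ^ q) := fun y =>
      (Real.enorm_eq_ofReal (Real.rpow_nonneg (norm_nonneg y) q))
    simp only [this]
    exact hmom n
  -- integrability of η k
  have hint_eta : ∀ n k, Integrable (fun y => η k y) (μs n) := by
    intro n k
    have := hprob n
    refine Integrable.mono' (integrable_const (k : ℝ))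
      ((etaF_continuous e hq0.le k).aestronglyMeasurable) ?_
    filter_upwards with y
    rw [Real.norm_eq_abs, abs_of_nonneg (etaF_nonneg e q k y)]
    exact etaF_le_k e q k y
  set c : ℕ → ℕ → ℝ := fun n k => ∫ y, η k y ∂(μs n) with hc
  have hc_nonneg : ∀ n k, 0 ≤ c n k := fun n k =>
    integral_nonneg fun y => etaF_nonneg e q k y
  set M : ℕ → ℝ := fun n => ∫ y, ‖y‖ ^ q ∂(μs n) with hM
  have hM_nonneg : ∀ n, 0 ≤ M n := fun n =>
    integral_nonneg fun y => Real.rpow_nonneg (norm_nonneg y) q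
  have hc_le : ∀ n k, c n k ≤ M n := fun n k =>
    integral_mono (hint_eta n k) (hint_normq n) fun y => etaF_le_norm he1 hq0.le k y
  haveI : Fact ((1:ℝ≥0∞) ≤ 1) := ⟨le_rfl⟩
  have honetoReal : (0:ℝ) < (1:ℝ≥0∞).toReal := by norm_num
  -- summability for elements of ℓ¹
  have hsumA : ∀ a : lp (fun _ : ℕ => ℝ) 1, Summable fun k => ‖(a : ∀ _:ℕ, ℝ) k‖ := by
    intro a
    have := (lp.memℓp a).summable honetoReal
    simpa using this
  have hnorm_lp : ∀ a : lp (fun _ : ℕ => ℝ) 1, ‖a‖ = ∑' k, ‖(a : ∀ _:ℕ, ℝ) k‖ := by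
    intro a
    rw [lp.norm_eq_tsum_rpow honetoReal]
    simp
  have hsum : ∀ (a : lp (fun _ : ℕ => ℝ) 1) n, Summable fun k => (a : ∀ _:ℕ, ℝ) k * c n k := by
    intro a n
    refine Summable.of_norm_bounded ((hsumA a).mul_right (M n)) fun k => ?_
    rw [norm_mul]
    exact mul_le_mul_of_nonneg_left
      (by rw [Real.norm_eq_abs, abs_of_nonneg (hc_nonneg n k)]; exact hc_le n k)
      (norm_nonneg _)
  let T : ℕ → lp (fun _ : ℕ => ℝ) 1 →L[ℝ] ℝ := fun n =>
    LinearMap.mkContinuous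
      { toFun := fun a => ∑' k, (a : ∀ _:ℕ, ℝ) k * c n k
        map_add' := fun a b => by
          simp only [lp.coeFn_add, Pi.add_apply, add_mul]
          exact Summable.tsum_add (hsum a n) (hsum b n)
        map_smul' := fun r a => by
          simp only [lp.coeFn_smul, Pi.smul_apply, smul_eq_mul, mul_assoc,
            RingHom.id_apply]
          exact tsum_mul_left }
      (M n)
      (by
        intro a
        have h1 : ‖∑' k, (a : ∀ _:ℕ, ℝ) k * c n k‖ ≤ ∑' k, ‖(a : ∀ _:ℕ, ℝ) k * c n k‖ :=
          norm_tsum_le_tsum_norm ((hsum a n).abs.congr ?_)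
        · refine h1.trans ?_
          have h2 : ∑' k, ‖(a : ∀ _:ℕ, ℝ) k * c n k‖ ≤ ∑' k, ‖(a : ∀ _:ℕ, ℝ) k‖ * M n := by
            refine Summable.tsum_le_tsum (fun k => ?_) ((hsum a n).norm) ((hsumA a).mul_right (M n))
            rw [norm_mul]
            exact mul_le_mul_of_nonneg_left
              (by rw [Real.norm_eq_abs, abs_of_nonneg (hc_nonneg n k)]; exact hc_le n k)
              (norm_nonneg _)
          refine h2.trans ?_
          rw [tsum_mul_right, hnorm_lp a, mul_comm]
        · intro k; rw [Real.norm_eq_abs])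
  have hT_apply : ∀ n a, T n a = ∑' k, (a : ∀ _:ℕ, ℝ) k * c n k := fun n a => rfl
  -- pointwise boundedness of the T n
  have hpt : ∀ a : lp (fun _ : ℕ => ℝ) 1, ∃ C, ∀ n, ‖T n a‖ ≤ C := by
    intro a
    have ha : Summable fun k => ‖(a : ∀ _:ℕ, ℝ) k‖ := hsumA a
    set av : ∀ _:ℕ, ℝ := (a : ∀ _:ℕ, ℝ) with hav
    set ζ : Y → ℝ := fun y => ∑' k, av k * η k y with hζ
    have hterm : ∀ (y : Y) (k : ℕ), ‖av k * η k y‖ ≤ ‖av k‖ * ‖y‖ ^ q := by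
      intro y k
      rw [norm_mul]
      refine mul_le_mul_of_nonneg_left ?_ (norm_nonneg _)
      rw [Real.norm_eq_abs, abs_of_nonneg (etaF_nonneg e q k y)]
      exact etaF_le_norm he1 hq0.le k y
    have hsum_pt : ∀ y : Y, Summable fun k => av k * η k y := fun y =>
      Summable.of_norm_bounded (ha.mul_right (‖y‖ ^ q)) (hterm y)
    have hsummn : ∀ y : Y, Summable fun k => ‖av k * η k y‖ := fun y =>
      Summable.of_nonneg_of_le (fun k => norm_nonneg _) (hterm y) (ha.mul_right (‖y‖ ^ q))
    -- sequential weak continuity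
    have hswc : SeqWeakCont ζ := by
      intro ys y₀ hw
      obtain ⟨R, hR0, hR⟩ := bdd_of_weakSeqTendsto hw
      refine tendsto_tsum_of_dominated_convergence (bound := fun k => ‖av k‖ * R ^ q)
        (ha.mul_right (R ^ q))
        (fun k => (etaF_seqTendsto e hq0.le k hw).const_mul (av k)) ?_
      filter_upwards with j k
      refine (hterm (ys j) k).trans ?_
      exact mul_le_mul_of_nonneg_left
        (Real.rpow_le_rpow (norm_nonneg _) (hR j) hq0.le) (norm_nonneg _)
    -- growth condition
    have hgrowth : ∀ ε : ℝ, 0 < ε → ∃ A : ℝ, 0 ≤ A ∧ ∀ y, |ζ y| ≤ A + ε * ‖y‖ ^ q := by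
      intro ε hε
      have htail : Tendsto (fun K => ∑' k, ‖av (k + K)‖) atTop (𝓝 0) :=
        tendsto_sum_nat_add (fun k => ‖av k‖)
      obtain ⟨K, hK⟩ : ∃ K, ∑' k, ‖av (k + K)‖ < ε :=
        ((htail.eventually (gt_mem_nhds hε)).exists)
      refine ⟨∑ k ∈ Finset.range K, ‖av k‖ * k,
        Finset.sum_nonneg fun k _ => mul_nonneg (norm_nonneg _) (Nat.cast_nonneg _),
        fun y => ?_⟩
      have h0 : |ζ y| ≤ ∑' k, ‖av k * η k y‖ := by
        rw [← Real.norm_eq_abs]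
        exact norm_tsum_le_tsum_norm (hsummn y)
      have hsplit : ∑' k, ‖av k * η k y‖
          = ∑ k ∈ Finset.range K, ‖av k * η k y‖ + ∑' k, ‖av (k + K) * η (k + K) y‖ :=
        ((hsummn y).sum_add_tsum_nat_add K).symm
      have hhead : ∑ k ∈ Finset.range K, ‖av k * η k y‖
          ≤ ∑ k ∈ Finset.range K, ‖av k‖ * k := by
        refine Finset.sum_le_sum fun k _ => ?_
        rw [norm_mul]
        refine mul_le_mul_of_nonneg_left ?_ (norm_nonneg _)
        rw [Real.norm_eq_abs, abs_of_nonneg (etaF_nonneg e q k y)]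
        exact etaF_le_k e q k y
      have htail2 : ∑' k, ‖av (k + K) * η (k + K) y‖ ≤ ε * ‖y‖ ^ q := by
        have h1 : ∑' k, ‖av (k + K) * η (k + K) y‖
            ≤ ∑' k, ‖av (k + K)‖ * ‖y‖ ^ q := by
          refine Summable.tsum_le_tsum (fun k => hterm y (k + K))
            ((summable_nat_add_iff K).2 (hsummn y))
            (((summable_nat_add_iff K).2 ha).mul_right (‖y‖ ^ q))
        refine h1.trans ?_
        rw [tsum_mul_right]
        exact mul_le_mul_of_nonneg_right hK.le (Real.rpow_nonneg (norm_nonneg y) q)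
      calc |ζ y| ≤ ∑' k, ‖av k * η k y‖ := h0
        _ = _ + _ := hsplit
        _ ≤ (∑ k ∈ Finset.range K, ‖av k‖ * k) + ε * ‖y‖ ^ q := add_le_add hhead htail2
    -- the integral of ζ equals T n a
    have hintζ : ∀ n, ∫ y, ζ y ∂(μs n) = T n a := by
      intro n
      have := hprob n
      rw [hT_apply, hζ]
      rw [integral_tsum (f := fun k y => av k * η k y) (fun k => (continuous_const.mul
        (etaF_continuous e hq0.le k)).aestronglyMeasurable) ?_]
      · refine tsum_congr fun k => ?_
        rw [hc]
        exact integral_const_mul (av k) _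
      · have hbd : ∀ k, ∫⁻ y, ‖av k * η k y‖₊ ∂(μs n)
            ≤ (‖av k‖₊ : ℝ≥0∞) * ∫⁻ y, ENNReal.ofReal (‖y‖ ^ q) ∂(μs n) := by
          intro k
          calc ∫⁻ y, ‖av k * η k y‖₊ ∂(μs n)
              ≤ ∫⁻ y, (‖av k‖₊ : ℝ≥0∞) * ENNReal.ofReal (‖y‖ ^ q) ∂(μs n) := by
                refine lintegral_mono fun y => ?_
                rw [nnnorm_mul, ENNReal.coe_mul]
                refine mul_le_mul_right ?_ _
                rw [← enorm_eq_nnnorm, Real.enorm_eq_ofReal (etaF_nonneg e q k y)]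
                exact ENNReal.ofReal_le_ofReal (etaF_le_norm he1 hq0.le k y)
            _ = (‖av k‖₊ : ℝ≥0∞) * ∫⁻ y, ENNReal.ofReal (‖y‖ ^ q) ∂(μs n) :=
                lintegral_const_mul _ hnormq_cont.measurable.ennreal_ofReal
        refine ne_top_of_le_ne_top ?_ (ENNReal.tsum_le_tsum hbd)
        rw [ENNReal.tsum_mul_right]
        refine ENNReal.mul_ne_top ?_ (hmom n).ne
        rw [ENNReal.tsum_coe_ne_top_iff_summable]
        exact NNReal.summable_coe.mp (by simpa [coe_nnnorm] using ha)
    have hten := hconv ζ hswc hgrowth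
    obtain ⟨C0, hC0⟩ := hten.norm.bddAbove_range
    refine ⟨C0, fun n => ?_⟩
    rw [← hintζ n]
    exact hC0 ⟨n, rfl⟩
  obtain ⟨C, hC⟩ := banach_steinhaus hpt
  -- c n k ≤ C
  have hcC : ∀ n k, c n k ≤ C := by
    intro n k
    set δ : lp (fun _ : ℕ => ℝ) 1 := lp.single 1 k (1:ℝ) with hδ
    have hsingle : T n δ = c n k := by
      rw [hT_apply]
      rw [tsum_eq_single k]
      · rw [hδ, lp.single_apply_self, one_mul]
      · intro m hm
        rw [hδ, lp.single_apply_ne _ _ _ hm, zero_mul]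
    have hns : ‖δ‖ = 1 := by
      have := lp.norm_single (E := fun _ : ℕ => ℝ) zero_lt_one k (1:ℝ)
      simpa [hδ] using this
    calc c n k = T n δ := hsingle.symm
      _ ≤ ‖T n δ‖ := le_abs_self _
      _ ≤ ‖T n‖ * ‖δ‖ := (T n).le_opNorm _
      _ ≤ C * 1 := by
          rw [hns]
          exact mul_le_mul_of_nonneg_right (hC n) zero_le_one
      _ = C := mul_one C
  -- conclude via monotone convergence
  refine ⟨ENNReal.ofReal C, ENNReal.ofReal_ne_top, fun n => ?_⟩
  have hmeas : ∀ k, Measurable fun y => ENNReal.ofReal (η k y) :=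
    fun k => (etaF_continuous e hq0.le k).measurable.ennreal_ofReal
  have hmono : Monotone fun k => fun y => ENNReal.ofReal (η k y) := fun i j hij y =>
    ENNReal.ofReal_le_ofReal (etaF_mono e hq0.le y hij)
  have hptsup : ∀ y : Y, (⨆ k, ENNReal.ofReal (η k y)) = ENNReal.ofReal (‖y‖ ^ q) := by
    intro y
    have ht : Tendsto (fun k => ENNReal.ofReal (η k y)) atTop
        (𝓝 (ENNReal.ofReal (‖y‖ ^ q))) :=
      (ENNReal.continuous_ofReal.tendsto _).comp (etaF_tendsto he1 he2 hq0.le y)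
    have hm : Monotone fun k => ENNReal.ofReal (η k y) := fun i j hij =>
      ENNReal.ofReal_le_ofReal (etaF_mono e hq0.le y hij)
    exact tendsto_nhds_unique (tendsto_atTop_iSup hm) ht
  calc ∫⁻ y, ENNReal.ofReal (‖y‖ ^ q) ∂(μs n)
      = ∫⁻ y, ⨆ k, ENNReal.ofReal (η k y) ∂(μs n) := by
        refine lintegral_congr fun y => (hptsup y).symm
    _ = ⨆ k, ∫⁻ y, ENNReal.ofReal (η k y) ∂(μs n) := lintegral_iSup hmeas hmono
    _ ≤ ENNReal.ofReal C := by
        refine iSup_le fun k => ?_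
        have : ∫⁻ y, ENNReal.ofReal (η k y) ∂(μs n) = ENNReal.ofReal (c n k) := by
          rw [hc]
          exact (ofReal_integral_eq_lintegral_ofReal (hint_eta n k)
            (Filter.Eventually.of_forall fun y => etaF_nonneg e q k y)).symm
        rw [this]
        exact ENNReal.ofReal_le_ofReal (hcC n k)
end
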